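/- arXiv:0910.2853 — 5 statements merged into one kernel-verified Lean document; each statement's English description precedes it below -/
import Mathlib

section
/- Every locally decreasing abstract rewrite system is confluent. That is, if ⟨A, {→_α}_{α∈I}⟩ is an ARS and > is a well-founded strict order on I such that LD_>(α,β) holds for all α, β ∈ I, then the union → of all the relations →_α is confluent. -/
open Relation

/-- The union of an indexed family of relations (the rewrite relation of the ARS). -/
def unionRel {A I : Type*} (r : I → A → A → Prop) : A → A → Prop :=
  fun a b => ∃ α, r α a b

/-- `⇣_α`: the union of `→_β` over all labels `β` with `α > β` (here `gt α β`). -/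
def below {A I : Type*} (r : I → A → A → Prop) (gt : I → I → Prop) (α : I) :
    A → A → Prop :=
  fun a b => ∃ β, gt α β ∧ r β a b

/-- Confluence of a binary relation. -/
def Confluent {A : Type*} (r : A → A → Prop) : Prop :=
  ∀ s t u, ReflTransGen r s t → ReflTransGen r s u →
    ∃ v, ReflTransGen r t v ∧ ReflTransGen r u v

universe u

namespace Ordinal

/-- natural (Hessenberg) sum of ordinals -/
noncomputable def nadd : Ordinal.{u} → Ordinal.{u} → Ordinal.{u}
  | a, b =>
    max (⨆ x : Set.Iio a, Order.succ (nadd x.1 b)) (⨆ y : Set.Iio b, Order.succ (nadd a y.1))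
termination_by a b => (a, b)
decreasing_by
  · exact Prod.Lex.left _ _ x.2
  · exact Prod.Lex.right _ y.2

infixl:65 " ♯ " => nadd

theorem nadd_def (a b : Ordinal.{u}) : a ♯ b =
    max (⨆ x : Set.Iio a, Order.succ (x.1 ♯ b)) (⨆ y : Set.Iio b, Order.succ (a ♯ y.1)) := by
  rw [nadd]

theorem nadd_le_iff {a b c : Ordinal.{u}} :
    b ♯ c ≤ a ↔ (∀ b' < b, b' ♯ c < a) ∧ ∀ c' < c, b ♯ c' < a := by
  rw [nadd_def, max_le_iff, Ordinal.iSup_le_iff, Ordinal.iSup_le_iff]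
  simp only [Subtype.forall, Set.mem_Iio, Order.succ_le_iff]

theorem lt_nadd_iff {a b c : Ordinal.{u}} :
    a < b ♯ c ↔ (∃ b' < b, a ≤ b' ♯ c) ∨ ∃ c' < c, a ≤ b ♯ c' := by
  rw [← not_le, nadd_le_iff]
  simp only [not_and_or, not_forall, not_lt, exists_prop]

theorem nadd_lt_nadd_left {b c : Ordinal.{u}} (h : b < c) (a : Ordinal.{u}) : a ♯ b < a ♯ c :=
  lt_nadd_iff.2 (Or.inr ⟨b, h, le_rfl⟩)

theorem nadd_lt_nadd_right {b c : Ordinal.{u}} (h : b < c) (a : Ordinal.{u}) : b ♯ a < c ♯ a :=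
  lt_nadd_iff.2 (Or.inl ⟨b, h, le_rfl⟩)

theorem nadd_le_nadd_left {b c : Ordinal.{u}} (h : b ≤ c) (a : Ordinal.{u}) : a ♯ b ≤ a ♯ c := by
  rcases h.lt_or_eq with h | rfl
  · exact (nadd_lt_nadd_left h a).le
  · exact le_rfl

theorem nadd_le_nadd_right {b c : Ordinal.{u}} (h : b ≤ c) (a : Ordinal.{u}) : b ♯ a ≤ c ♯ a := by
  rcases h.lt_or_eq with h | rfl
  · exact (nadd_lt_nadd_right h a).le
  · exact le_rfl

theorem nadd_comm (a b : Ordinal.{u}) : a ♯ b = b ♯ a := by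
  induction a using Ordinal.induction generalizing b with
  | _ a IHa =>
  induction b using Ordinal.induction with
  | _ b IHb =>
  apply le_antisymm
  · rw [nadd_le_iff]
    constructor
    · intro a' ha
      rw [IHa a' ha]
      exact nadd_lt_nadd_left ha b
    · intro b' hb
      rw [IHb b' hb]
      exact nadd_lt_nadd_right hb a
  · rw [nadd_le_iff]
    constructor
    · intro b' hb
      rw [← IHb b' hb]
      exact nadd_lt_nadd_left hb a
    · intro a' ha
      rw [← IHa a' ha b]
      exact nadd_lt_nadd_right ha b

@[simp]
theorem nadd_zero (a : Ordinal.{u}) : a ♯ 0 = a := by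
  induction a using Ordinal.induction with
  | _ a IH =>
  apply le_antisymm
  · rw [nadd_le_iff]
    refine ⟨fun a' h => ?_, fun c' h => ?_⟩
    · rw [IH a' h]
      exact h
    · exact absurd h (not_lt.2 (zero_le : (0 : Ordinal) ≤ c'))
  · apply le_of_forall_lt
    intro x hx
    rw [← IH x hx]
    exact nadd_lt_nadd_right hx 0

@[simp]
theorem zero_nadd (a : Ordinal.{u}) : 0 ♯ a = a := by
  rw [nadd_comm, nadd_zero]

theorem le_self_nadd {a b : Ordinal.{u}} : a ≤ a ♯ b :=
  calc a = a ♯ 0 := (nadd_zero a).symm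
    _ ≤ a ♯ b := nadd_le_nadd_left (zero_le : (0 : Ordinal) ≤ b) a

theorem nadd_assoc (a b c : Ordinal.{u}) : a ♯ b ♯ c = a ♯ (b ♯ c) := by
  induction a using Ordinal.induction generalizing b c with
  | _ a IHa =>
  induction b using Ordinal.induction generalizing c with
  | _ b IHb =>
  induction c using Ordinal.induction with
  | _ c IHc =>
  apply le_antisymm
  · rw [nadd_le_iff]
    constructor
    · intro d hd
      rcases lt_nadd_iff.1 hd with ⟨a', ha, hle⟩ | ⟨b', hb, hle⟩
      · calc d ♯ c ≤ a' ♯ b ♯ c := nadd_le_nadd_right hle c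
          _ = a' ♯ (b ♯ c) := IHa a' ha b c
          _ < a ♯ (b ♯ c) := nadd_lt_nadd_right ha _
      · calc d ♯ c ≤ a ♯ b' ♯ c := nadd_le_nadd_right hle c
          _ = a ♯ (b' ♯ c) := IHb b' hb c
          _ < a ♯ (b ♯ c) := nadd_lt_nadd_left (nadd_lt_nadd_right hb c) a
    · intro c' hc
      rw [IHc c' hc]
      exact nadd_lt_nadd_left (nadd_lt_nadd_left hc b) a
  · rw [nadd_le_iff]
    constructor
    · intro a' ha
      rw [← IHa a' ha b c]
      exact nadd_lt_nadd_right (nadd_lt_nadd_right ha b) c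
    · intro d hd
      rcases lt_nadd_iff.1 hd with ⟨b', hb, hle⟩ | ⟨c', hc, hle⟩
      · calc a ♯ d ≤ a ♯ (b' ♯ c) := nadd_le_nadd_left hle a
          _ = a ♯ b' ♯ c := (IHb b' hb c).symm
          _ < a ♯ b ♯ c := nadd_lt_nadd_right (nadd_lt_nadd_left hb a) c
      · calc a ♯ d ≤ a ♯ (b ♯ c') := nadd_le_nadd_left hle a
          _ = a ♯ b ♯ c' := (IHc c' hc).symm
          _ < a ♯ b ♯ c := nadd_lt_nadd_left hc _

theorem add_le_nadd (a b : Ordinal.{u}) : a + b ≤ a ♯ b := by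
  induction b using Ordinal.induction with
  | _ b IH =>
  apply le_of_forall_lt
  intro x hx
  rcases lt_or_ge x a with h | h
  · exact h.trans_le le_self_nadd
  · obtain ⟨d, rfl⟩ : ∃ d, x = a + d := ⟨x - a, (Ordinal.add_sub_cancel_of_le h).symm⟩
    have hd : d < b := by rwa [add_lt_add_iff_left] at hx
    exact (IH d hd).trans_lt (nadd_lt_nadd_left hd a)

end Ordinal

/-- ordinals with natural addition -/
def NatOrdinal : Type (u + 1) := Ordinal.{u}

namespace NatOrdinal

noncomputable instance : LinearOrder NatOrdinal := inferInstanceAs (LinearOrder Ordinal)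

instance : Zero NatOrdinal := ⟨(0 : Ordinal)⟩

noncomputable instance : Add NatOrdinal := ⟨Ordinal.nadd⟩

noncomputable instance : AddCommMonoid NatOrdinal where
  add_assoc := Ordinal.nadd_assoc
  zero_add := Ordinal.zero_nadd
  add_zero := Ordinal.nadd_zero
  add_comm := Ordinal.nadd_comm
  nsmul := nsmulRec
  nsmul_zero := fun _ => rfl
  nsmul_succ := fun _ _ => rfl

instance : IsOrderedCancelAddMonoid NatOrdinal where
  add_le_add_left := fun a b h c =>
    show Ordinal.nadd a c ≤ Ordinal.nadd b c from Ordinal.nadd_le_nadd_right h c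
  le_of_add_le_add_left := fun a b c h =>
    not_lt.1 fun h' => not_lt.2 h
      (show Ordinal.nadd a c < Ordinal.nadd a b from Ordinal.nadd_lt_nadd_left h' a)

theorem induction {p : NatOrdinal → Prop} (i : NatOrdinal)
    (h : ∀ j, (∀ k < j, p k) → p j) : p i :=
  Ordinal.induction i h

end NatOrdinal

/-- the identity from ordinals to natural ordinals -/
def Ordinal.toNatOrdinal (o : Ordinal) : NatOrdinal := o

open Ordinal

namespace LDDproof

private theorem nadd_decomp (e : Ordinal) (He : ∀ x < ω ^ e, ∀ y < ω ^ e, x ♯ y < ω ^ e) :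
    ∀ (k : ℕ) (γ : Ordinal) (q p : ℕ) (r s : Ordinal), q + p ≤ k → r ♯ s ≤ γ →
      r < ω ^ e → s < ω ^ e →
      (ω ^ e * q + r) ♯ (ω ^ e * p + s) = ω ^ e * ((q + p : ℕ) : Ordinal) + (r ♯ s) := by
  have hW0 : (ω ^ e : Ordinal) ≠ 0 := opow_ne_zero e omega0_ne_zero
  intro k
  induction k using Nat.strong_induction_on with
  | _ k IHk =>
  intro γ
  induction γ using Ordinal.induction with
  | _ γ IHγ =>
  intro q p r s hqp hγ hr hs
  apply le_antisymm
  · rw [nadd_le_iff]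
    constructor
    · intro z hz
      rcases lt_or_ge z (ω ^ e * q) with hzq | hzq
      · have hj0 : z / ω ^ e < (q : Ordinal) := (Ordinal.div_lt hW0).2 hzq
        obtain ⟨j, hj⟩ := lt_omega0.1 (hj0.trans (nat_lt_omega0 q))
        have hjq : j < q := by rw [hj] at hj0; exact_mod_cast hj0
        have hmod : z % ω ^ e < ω ^ e := mod_lt z hW0
        have hzeq : ω ^ e * (j : Ordinal) + z % ω ^ e = z := by
          rw [← hj]; exact div_add_mod z (ω ^ e)
        have hrec := IHk (j + p) (by omega) ((z % ω ^ e) ♯ s) j p (z % ω ^ e) s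
          le_rfl le_rfl hmod hs
        rw [hzeq] at hrec
        rw [hrec]
        have hcast : ((j + p : ℕ) : Ordinal) + 1 = ((j + p + 1 : ℕ) : Ordinal) := by push_cast; ring
        calc ω ^ e * ((j + p : ℕ) : Ordinal) + (z % ω ^ e ♯ s)
            < ω ^ e * ((j + p : ℕ) : Ordinal) + ω ^ e := add_lt_add_right (He _ hmod _ hs) _
          _ = ω ^ e * ((j + p + 1 : ℕ) : Ordinal) := by rw [← hcast, mul_add, mul_one]
          _ ≤ ω ^ e * ((q + p : ℕ) : Ordinal) := by
              apply mul_le_mul_right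
              have : j + p + 1 ≤ q + p := by omega
              exact_mod_cast this
          _ ≤ ω ^ e * ((q + p : ℕ) : Ordinal) + (r ♯ s) := le_self_add
      · obtain ⟨r', rfl⟩ : ∃ r', z = ω ^ e * q + r' := ⟨z - ω ^ e * q,
          (Ordinal.add_sub_cancel_of_le hzq).symm⟩
        have hr' : r' < r := by rwa [add_lt_add_iff_left] at hz
        have hrec := IHγ (r' ♯ s) (lt_of_lt_of_le (nadd_lt_nadd_right hr' s) hγ)
          q p r' s hqp le_rfl (hr'.trans hr) hs
        rw [hrec]
        exact add_lt_add_right (nadd_lt_nadd_right hr' s) _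
    · intro z hz
      rcases lt_or_ge z (ω ^ e * p) with hzp | hzp
      · have hj0 : z / ω ^ e < (p : Ordinal) := (Ordinal.div_lt hW0).2 hzp
        obtain ⟨j, hj⟩ := lt_omega0.1 (hj0.trans (nat_lt_omega0 p))
        have hjp : j < p := by rw [hj] at hj0; exact_mod_cast hj0
        have hmod : z % ω ^ e < ω ^ e := mod_lt z hW0
        have hzeq : ω ^ e * (j : Ordinal) + z % ω ^ e = z := by
          rw [← hj]; exact div_add_mod z (ω ^ e)
        have hrec := IHk (q + j) (by omega) (r ♯ (z % ω ^ e)) q j r (z % ω ^ e)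
          le_rfl le_rfl hr hmod
        rw [hzeq] at hrec
        rw [hrec]
        have hcast : ((q + j : ℕ) : Ordinal) + 1 = ((q + j + 1 : ℕ) : Ordinal) := by push_cast; ring
        calc ω ^ e * ((q + j : ℕ) : Ordinal) + (r ♯ z % ω ^ e)
            < ω ^ e * ((q + j : ℕ) : Ordinal) + ω ^ e := add_lt_add_right (He _ hr _ hmod) _
          _ = ω ^ e * ((q + j + 1 : ℕ) : Ordinal) := by rw [← hcast, mul_add, mul_one]
          _ ≤ ω ^ e * ((q + p : ℕ) : Ordinal) := by
              apply mul_le_mul_right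
              have : q + j + 1 ≤ q + p := by omega
              exact_mod_cast this
          _ ≤ ω ^ e * ((q + p : ℕ) : Ordinal) + (r ♯ s) := le_self_add
      · obtain ⟨s', rfl⟩ : ∃ s', z = ω ^ e * p + s' := ⟨z - ω ^ e * p,
          (Ordinal.add_sub_cancel_of_le hzp).symm⟩
        have hs' : s' < s := by rwa [add_lt_add_iff_left] at hz
        have hrec := IHγ (r ♯ s') (lt_of_lt_of_le (nadd_lt_nadd_left hs' r) hγ)
          q p r s' hqp le_rfl hr (hs'.trans hs)
        rw [hrec]
        exact add_lt_add_right (nadd_lt_nadd_left hs' r) _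
  · apply le_of_forall_lt
    intro z hz
    rcases lt_or_ge z (ω ^ e * ((q + p : ℕ) : Ordinal)) with hzqp | hzqp
    · refine hzqp.trans_le ?_
      rcases Nat.eq_zero_or_pos p with rfl | hp
      · calc ω ^ e * ((q + 0 : ℕ) : Ordinal) = ω ^ e * q := by norm_num
          _ ≤ ω ^ e * q + r := le_self_add
          _ ≤ _ := le_self_nadd
      · have habs : r + (ω ^ e * p + s) = ω ^ e * p + s := by
          rw [← add_assoc]
          congr 1
          exact Ordinal.add_absorp hr (le_mul_left _ (by exact_mod_cast hp))
        calc ω ^ e * ((q + p : ℕ) : Ordinal) = ω ^ e * q + ω ^ e * p := by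
              push_cast [mul_add]; ring
          _ ≤ ω ^ e * q + (ω ^ e * p + s) := add_le_add_right (le_self_add) _
          _ = (ω ^ e * q + r) + (ω ^ e * p + s) := by rw [add_assoc, habs]
          _ ≤ _ := add_le_nadd _ _
    · obtain ⟨w, rfl⟩ : ∃ w, z = ω ^ e * ((q + p : ℕ) : Ordinal) + w :=
        ⟨z - ω ^ e * ((q + p : ℕ) : Ordinal), (Ordinal.add_sub_cancel_of_le hzqp).symm⟩
      have hw : w < r ♯ s := by rwa [add_lt_add_iff_left] at hz
      rcases lt_nadd_iff.1 hw with ⟨r', hr', hwle⟩ | ⟨s', hs', hwle⟩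
      · have hrec := IHγ (r' ♯ s) (lt_of_lt_of_le (nadd_lt_nadd_right hr' s) hγ)
          q p r' s hqp le_rfl (hr'.trans hr) hs
        calc ω ^ e * ((q + p : ℕ) : Ordinal) + w
            ≤ ω ^ e * ((q + p : ℕ) : Ordinal) + (r' ♯ s) := add_le_add_right hwle _
          _ = (ω ^ e * q + r') ♯ (ω ^ e * p + s) := hrec.symm
          _ < _ := nadd_lt_nadd_right (add_lt_add_right hr' _) _
      · have hrec := IHγ (r ♯ s') (lt_of_lt_of_le (nadd_lt_nadd_left hs' r) hγ)
          q p r s' hqp le_rfl hr (hs'.trans hs)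
        calc ω ^ e * ((q + p : ℕ) : Ordinal) + w
            ≤ ω ^ e * ((q + p : ℕ) : Ordinal) + (r ♯ s') := add_le_add_right hwle _
          _ = (ω ^ e * q + r) ♯ (ω ^ e * p + s') := hrec.symm
          _ < _ := nadd_lt_nadd_left (add_lt_add_right hs' _) _

theorem principal_nadd_opow : ∀ (o : Ordinal), ∀ x < ω ^ o, ∀ y < ω ^ o, x ♯ y < ω ^ o := by
  intro o
  induction o using Ordinal.induction with
  | _ o IH =>
  rcases Ordinal.zero_or_succ_or_isSuccLimit o with rfl | ⟨e, rfl⟩ | ho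
  · intro x hx y hy
    rw [opow_zero] at *
    rw [Ordinal.lt_one_iff_zero] at hx hy
    subst hx; subst hy
    simpa using zero_lt_one
  · have He : ∀ x < ω ^ e, ∀ y < ω ^ e, x ♯ y < ω ^ e := IH e (Order.lt_succ e)
    have hW0 : (ω ^ e : Ordinal) ≠ 0 := opow_ne_zero e omega0_ne_zero
    intro x hx y hy
    rw [opow_succ] at hx hy ⊢
    obtain ⟨c1, hc1, hx1⟩ := (lt_mul_iff_of_isSuccLimit isSuccLimit_omega0).1 hx
    obtain ⟨c2, hc2, hy1⟩ := (lt_mul_iff_of_isSuccLimit isSuccLimit_omega0).1 hy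
    obtain ⟨m, rfl⟩ := lt_omega0.1 hc1
    obtain ⟨n, rfl⟩ := lt_omega0.1 hc2
    have hqx : x / ω ^ e < (m : Ordinal) := (Ordinal.div_lt hW0).2 hx1
    have hqy : y / ω ^ e < (n : Ordinal) := (Ordinal.div_lt hW0).2 hy1
    obtain ⟨q, hq⟩ := lt_omega0.1 (hqx.trans (nat_lt_omega0 m))
    obtain ⟨p, hp⟩ := lt_omega0.1 (hqy.trans (nat_lt_omega0 n))
    have hxe : ω ^ e * (q : Ordinal) + x % ω ^ e = x := by rw [← hq]; exact div_add_mod x _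
    have hye : ω ^ e * (p : Ordinal) + y % ω ^ e = y := by rw [← hp]; exact div_add_mod y _
    have hxm : x % ω ^ e < ω ^ e := mod_lt x hW0
    have hym : y % ω ^ e < ω ^ e := mod_lt y hW0
    have hdec := nadd_decomp e He (q + p) ((x % ω ^ e) ♯ (y % ω ^ e)) q p
      (x % ω ^ e) (y % ω ^ e) le_rfl le_rfl hxm hym
    rw [hxe, hye] at hdec
    rw [hdec]
    have hcast : ((q + p : ℕ) : Ordinal) + 1 = ((q + p + 1 : ℕ) : Ordinal) := by push_cast; ring
    calc ω ^ e * ((q + p : ℕ) : Ordinal) + (x % ω ^ e ♯ y % ω ^ e)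
        < ω ^ e * ((q + p : ℕ) : Ordinal) + ω ^ e := add_lt_add_right (He _ hxm _ hym) _
      _ = ω ^ e * ((q + p + 1 : ℕ) : Ordinal) := by rw [← hcast, mul_add, mul_one]
      _ < ω ^ e * ω := mul_lt_mul_of_pos_left (nat_lt_omega0 _) (opow_pos e omega0_pos)
  · intro x hx y hy
    obtain ⟨e1, he1, hx1⟩ := (lt_opow_of_isSuccLimit omega0_ne_zero ho).1 hx
    obtain ⟨e2, he2, hy1⟩ := (lt_opow_of_isSuccLimit omega0_ne_zero ho).1 hy
    have h1 : x < ω ^ max e1 e2 :=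
      hx1.trans_le (opow_le_opow_right omega0_pos (le_max_left _ _))
    have h2 : y < ω ^ max e1 e2 :=
      hy1.trans_le (opow_le_opow_right omega0_pos (le_max_right _ _))
    exact (IH _ (max_lt he1 he2) x h1 y h2).trans_le
      (opow_le_opow_right omega0_pos (max_lt he1 he2).le)


section
variable {I : Type*} {gt : I → I → Prop}

/-- weight of a label -/
noncomputable def wt (hwf : WellFounded fun a b => gt b a) (c : I) : NatOrdinal :=
  Ordinal.toNatOrdinal (ω ^ (hwf.apply c).rank)

theorem wt_pos (hwf : WellFounded fun a b => gt b a) (c : I) : 0 < wt hwf c :=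
  opow_pos _ omega0_pos

theorem wt_lt (hwf : WellFounded fun a b => gt b a) {c d : I} (h : gt d c) :
    wt hwf c < wt hwf d := by
  have h2 := Acc.rank_lt_of_rel (hwf.apply d) (show (fun a b => gt b a) c d from h)
  rw [Subsingleton.elim ((hwf.apply d).inv h) (hwf.apply c)] at h2
  exact (opow_lt_opow_iff_right one_lt_omega0).2 h2

theorem wt_princ (hwf : WellFounded fun a b => gt b a) {c : I} {x y : NatOrdinal}
    (hx : x < wt hwf c) (hy : y < wt hwf c) : x + y < wt hwf c :=
  principal_nadd_opow _ _ hx _ hy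


theorem natord_le_self_add (x y : NatOrdinal) : x ≤ x + y := by
  have h0 : (0 : NatOrdinal) ≤ y := (zero_le : (0 : Ordinal) ≤ y)
  calc x = x + 0 := (add_zero x).symm
    _ ≤ x + y := add_le_add_right h0 x

open Classical in
/-- filtered ordinal measure of a list of labels -/
noncomputable def nu (hwf : WellFounded fun a b => gt b a) (P : I → Prop) :
    List I → NatOrdinal
  | [] => 0
  | c :: L => if P c then nu hwf P L else wt hwf c + nu hwf (fun x => P x ∨ gt c x) L

variable (hwf : WellFounded fun a b => gt b a) (htrans : Transitive gt)

theorem nu_nil (P : I → Prop) : nu hwf P [] = 0 := rfl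

open Classical in
theorem nu_cons (P : I → Prop) (c : I) (L : List I) :
    nu hwf P (c :: L) =
      if P c then nu hwf P L else wt hwf c + nu hwf (fun x => P x ∨ gt c x) L := rfl

theorem nu_cons_pos {P : I → Prop} {c : I} (h : P c) (L : List I) :
    nu hwf P (c :: L) = nu hwf P L := by rw [nu_cons, if_pos h]

theorem nu_cons_neg {P : I → Prop} {c : I} (h : ¬ P c) (L : List I) :
    nu hwf P (c :: L) = wt hwf c + nu hwf (fun x => P x ∨ gt c x) L := by
  rw [nu_cons, if_neg h]

theorem nu_congr {P Q : I → Prop} (h : ∀ x, P x ↔ Q x) (L : List I) :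
    nu hwf P L = nu hwf Q L := by
  have : P = Q := funext fun x => propext (h x)
  rw [this]

theorem nu_skip {P : I → Prop} : ∀ {L1 : List I}, (∀ x ∈ L1, P x) →
    ∀ (L2 : List I), nu hwf P (L1 ++ L2) = nu hwf P L2
  | [], _, L2 => rfl
  | c :: L1, h, L2 => by
    rw [List.cons_append, nu_cons_pos hwf (h c (by simp))]
    exact nu_skip (fun x hx => h x (by simp [hx])) L2

theorem nu_all {P : I → Prop} {L : List I} (h : ∀ x ∈ L, P x) : nu hwf P L = 0 := by
  have := nu_skip hwf h []
  rwa [List.append_nil] at this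

include htrans in
/-- Lemma C : un-establishing a bound `c` costs less than `wt c`. -/
theorem nu_unfilter (c : I) : ∀ (L : List I) (P : I → Prop),
    ∃ z, z < wt hwf c ∧ nu hwf P L ≤ nu hwf (fun x => P x ∨ gt c x) L + z
  | [], P => ⟨0, wt_pos hwf c, by simp [nu_nil]⟩
  | d :: L, P => by
    by_cases hPd : P d
    · obtain ⟨z, hz, hle⟩ := nu_unfilter c L P
      exact ⟨z, hz, by rwa [nu_cons_pos hwf hPd, nu_cons_pos hwf (Or.inl hPd)]⟩
    · by_cases hcd : gt c d
      · obtain ⟨z, hz, hle⟩ := nu_unfilter c L (fun x => P x ∨ gt d x)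
        refine ⟨wt hwf d + z, wt_princ hwf (wt_lt hwf hcd) hz, ?_⟩
        rw [nu_cons_neg hwf hPd, nu_cons_pos hwf (Or.inr hcd)]
        have hcongr : nu hwf (fun x => (P x ∨ gt d x) ∨ gt c x) L
            = nu hwf (fun x => P x ∨ gt c x) L := by
          apply nu_congr
          intro x
          constructor
          · rintro ((h | h) | h)
            · exact Or.inl h
            · exact Or.inr (htrans hcd h)
            · exact Or.inr h
          · rintro (h | h)
            · exact Or.inl (Or.inl h)
            · exact Or.inr h
        rw [hcongr] at hle
        calc wt hwf d + nu hwf (fun x => P x ∨ gt d x) L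
            ≤ wt hwf d + (nu hwf (fun x => P x ∨ gt c x) L + z) := add_le_add_right hle _
          _ = nu hwf (fun x => P x ∨ gt c x) L + (wt hwf d + z) := by abel
      · obtain ⟨z, hz, hle⟩ := nu_unfilter c L (fun x => P x ∨ gt d x)
        refine ⟨z, hz, ?_⟩
        rw [nu_cons_neg hwf hPd, nu_cons_neg hwf (by tauto : ¬ (P d ∨ gt c d))]
        have hcongr : nu hwf (fun x => (P x ∨ gt d x) ∨ gt c x) L
            = nu hwf (fun x => (P x ∨ gt c x) ∨ gt d x) L := nu_congr hwf (by tauto) L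
        rw [hcongr] at hle
        calc wt hwf d + nu hwf (fun x => P x ∨ gt d x) L
            ≤ wt hwf d + (nu hwf (fun x => (P x ∨ gt c x) ∨ gt d x) L + z) :=
              add_le_add_right hle _
          _ = (wt hwf d + nu hwf (fun x => (P x ∨ gt c x) ∨ gt d x) L) + z := by abel

include htrans in
/-- Lemma M : strengthening the filter decreases the measure. -/
theorem nu_anti : ∀ (L : List I) {P Q : I → Prop}, (∀ x, P x → Q x) →
    nu hwf Q L ≤ nu hwf P L
  | [], P, Q, _ => le_rfl
  | c :: L, P, Q, h => by
    by_cases hPc : P c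
    · rw [nu_cons_pos hwf hPc, nu_cons_pos hwf (h c hPc)]
      exact nu_anti L h
    · by_cases hQc : Q c
      · rw [nu_cons_pos hwf hQc, nu_cons_neg hwf hPc]
        obtain ⟨z, hz, hle⟩ := nu_unfilter hwf htrans c L Q
        calc nu hwf Q L ≤ nu hwf (fun x => Q x ∨ gt c x) L + z := hle
          _ ≤ nu hwf (fun x => P x ∨ gt c x) L + z :=
              add_le_add_left (nu_anti L (by tauto)) z
          _ ≤ nu hwf (fun x => P x ∨ gt c x) L + wt hwf c := add_le_add_right hz.le _
          _ = wt hwf c + nu hwf (fun x => P x ∨ gt c x) L := by abel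
      · rw [nu_cons_neg hwf hPc, nu_cons_neg hwf hQc]
        exact add_le_add_right (nu_anti L (by tauto)) _

include htrans in
theorem nu_append_le : ∀ (L1 : List I) {L2 : List I} {P : I → Prop},
    nu hwf P (L1 ++ L2) ≤ nu hwf P L1 + nu hwf P L2
  | [], L2, P => by simp [nu_nil]
  | c :: L1, L2, P => by
    by_cases hPc : P c
    · rw [List.cons_append, nu_cons_pos hwf hPc, nu_cons_pos hwf hPc]
      exact nu_append_le L1
    · rw [List.cons_append, nu_cons_neg hwf hPc, nu_cons_neg hwf hPc]
      calc wt hwf c + nu hwf (fun x => P x ∨ gt c x) (L1 ++ L2)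
          ≤ wt hwf c + (nu hwf (fun x => P x ∨ gt c x) L1
              + nu hwf (fun x => P x ∨ gt c x) L2) := add_le_add_right (nu_append_le L1) _
        _ ≤ wt hwf c + (nu hwf (fun x => P x ∨ gt c x) L1 + nu hwf P L2) := by
            refine add_le_add_right (add_le_add_right ?_ _) _
            exact nu_anti hwf htrans L2 (fun x => Or.inl)
        _ = (wt hwf c + nu hwf (fun x => P x ∨ gt c x) L1) + nu hwf P L2 := by abel

theorem nu_single_le (P : I → Prop) (c : I) : nu hwf P [c] ≤ wt hwf c := by
  by_cases h : P c
  · rw [nu_cons_pos hwf h]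
    exact (wt_pos hwf c).le
  · rw [nu_cons_neg hwf h, nu_nil]
    simp

theorem nu_below_lt {c : I} : ∀ (L : List I) (P : I → Prop), (∀ x ∈ L, gt c x) →
    nu hwf P L < wt hwf c
  | [], P, _ => wt_pos hwf c
  | d :: L, P, h => by
    by_cases hPd : P d
    · rw [nu_cons_pos hwf hPd]
      exact nu_below_lt L P (fun x hx => h x (by simp [hx]))
    · rw [nu_cons_neg hwf hPd]
      exact wt_princ hwf (wt_lt hwf (h d (by simp)))
        (nu_below_lt L _ (fun x hx => h x (by simp [hx])))

end

section
variable {I : Type*} {gt : I → I → Prop}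

/-- `bel κ x`: x is strictly below some element of κ. -/
def bel (gt : I → I → Prop) (κ : List I) (x : I) : Prop := ∃ e ∈ κ, gt e x

/-- The language of decreasing sequences `⇣κ* · b₁⁼ · ⇣(κb₁)* · b₂⁼ ⋯`. -/
inductive Dseq (gt : I → I → Prop) : List I → List I → List I → Prop
  | nil (κ ρ) (h : ∀ x ∈ ρ, bel gt κ x) : Dseq gt κ [] ρ
  | cons (κ b lam ρ0 B ρ1) (h0 : ∀ x ∈ ρ0, bel gt κ x) (hB : B = [] ∨ B = [b])
      (h1 : Dseq gt (κ ++ [b]) lam ρ1) : Dseq gt κ (b :: lam) (ρ0 ++ (B ++ ρ1))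

theorem bel_append {κ1 κ2 : List I} {x : I} :
    bel gt (κ1 ++ κ2) x ↔ bel gt κ1 x ∨ bel gt κ2 x := by
  simp [bel, List.mem_append, or_and_right, exists_or]

variable (htrans : Transitive gt)

include htrans in
theorem bel_cover {S T : List I} (h : ∀ e ∈ S, bel gt T e) {x : I} (hx : bel gt S x) :
    bel gt T x := by
  obtain ⟨e, he, hgt⟩ := hx
  obtain ⟨f, hf, hgf⟩ := h e he
  exact ⟨f, hf, htrans hgf hgt⟩

theorem Dseq.mono {κ1 κ2 lam ρ : List I} (h : ∀ x, bel gt κ1 x → bel gt κ2 x)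
    (hd : Dseq gt κ1 lam ρ) : Dseq gt κ2 lam ρ := by
  induction hd generalizing κ2 with
  | nil κ ρ hρ => exact Dseq.nil _ _ fun x hx => h x (hρ x hx)
  | cons κ b lam ρ0 B ρ1 h0 hB h1 IH =>
    refine Dseq.cons _ _ _ _ _ _ (fun x hx => h x (h0 x hx)) hB (IH ?_)
    intro x hx
    rcases bel_append.1 hx with hx | hx
    · exact bel_append.2 (Or.inl (h x hx))
    · exact bel_append.2 (Or.inr hx)

theorem Dseq.self : ∀ (κ lam : List I), Dseq gt κ lam lam
  | κ, [] => Dseq.nil _ _ (by simp)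
  | κ, b :: lam => by
    have := Dseq.cons (gt := gt) κ b lam [] [b] lam (by simp) (Or.inr rfl)
      (Dseq.self (κ ++ [b]) lam)
    simpa using this

theorem Dseq.prefix_bel {κ lam ρ p : List I} (hp : ∀ x ∈ p, bel gt κ x)
    (hd : Dseq gt κ lam ρ) : Dseq gt κ lam (p ++ ρ) := by
  cases hd with
  | nil κ ρ hρ =>
    refine Dseq.nil _ _ fun x hx => ?_
    rcases List.mem_append.1 hx with hx | hx
    · exact hp x hx
    · exact hρ x hx
  | cons κ b lam ρ0 B ρ1 h0 hB h1 =>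
    have := Dseq.cons (gt := gt) κ b lam (p ++ ρ0) B ρ1
      (fun x hx => by
        rcases List.mem_append.1 hx with hx | hx
        · exact hp x hx
        · exact h0 x hx) hB h1
    simpa [List.append_assoc] using this

theorem Dseq.mem {κ lam ρ : List I} (hd : Dseq gt κ lam ρ) :
    ∀ x ∈ ρ, bel gt (κ ++ lam) x ∨ x ∈ lam := by
  induction hd with
  | nil κ ρ hρ => exact fun x hx => Or.inl (by simpa using hρ x hx)
  | cons κ b lam ρ0 B ρ1 h0 hB h1 IH =>
    have hl : κ ++ [b] ++ lam = κ ++ (b :: lam) := by simp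
    intro x hx
    rcases List.mem_append.1 hx with hx | hx
    · refine Or.inl ?_
      obtain ⟨e, he, hgt⟩ := h0 x hx
      exact ⟨e, by simp [he], hgt⟩
    · rcases List.mem_append.1 hx with hx | hx
      · rcases hB with rfl | rfl
        · simp at hx
        · simp at hx
          exact Or.inr (by simp [hx])
      · rcases IH x hx with h | h
        · rw [hl] at h
          exact Or.inl h
        · exact Or.inr (by simp [h])

theorem Dseq.split : ∀ {s1 : List I} {κ s2 ρ : List I}, Dseq gt κ (s1 ++ s2) ρ →
    ∃ ρa ρb, ρ = ρa ++ ρb ∧ Dseq gt κ s1 ρa ∧ Dseq gt (κ ++ s1) s2 ρb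
  | [], κ, s2, ρ, hd => ⟨[], ρ, by simp, Dseq.nil _ _ (by simp), by simpa using hd⟩
  | c :: s1, κ, s2, ρ, hd => by
    cases hd with
    | cons _ _ _ ρ0 B ρ1 h0 hB h1 =>
      obtain ⟨ρa, ρb, rfl, ha, hb⟩ := Dseq.split h1
      refine ⟨ρ0 ++ (B ++ ρa), ρb, by simp [List.append_assoc], ?_, ?_⟩
      · exact Dseq.cons _ _ _ _ _ _ h0 hB ha
      · have : κ ++ [c] ++ s1 = κ ++ (c :: s1) := by simp
        rwa [this] at hb

theorem Dseq.append_one {κ lam ρA ρB : List I} {c : I} (hA : Dseq gt κ [c] ρA)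
    (hB : Dseq gt (κ ++ [c]) lam ρB) : Dseq gt κ (c :: lam) (ρA ++ ρB) := by
  cases hA with
  | cons _ _ _ ρ0 B ρ1 h0 hBc h1 =>
    cases h1 with
    | nil _ _ hρ1 =>
      have := Dseq.cons (gt := gt) κ c lam ρ0 B (ρ1 ++ ρB) h0 hBc
        (Dseq.prefix_bel hρ1 hB)
      simpa [List.append_assoc] using this

include htrans in
theorem Dseq.comp : ∀ {κ2 lam σ : List I}, Dseq gt κ2 lam σ →
    ∀ {κ ρ : List I}, Dseq gt κ σ ρ → Dseq gt (κ2 ++ κ) lam ρ := by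
  intro κ2 lam σ hσ
  induction hσ with
  | nil κ2 σ hσmem =>
    intro κ ρ hρ
    refine Dseq.nil _ _ fun x hx => ?_
    rcases Dseq.mem hρ x hx with h | h
    · rcases bel_append.1 h with h | h
      · exact bel_append.2 (Or.inr h)
      · exact bel_append.2 (Or.inl (bel_cover htrans hσmem h))
    · exact bel_append.2 (Or.inl (hσmem x h))
  | cons κ2 b lam σ0 B σ1 h0 hB h1 IH =>
    intro κ ρ hρ
    obtain ⟨ρa, ρbc, rfl, hρa, hρbc⟩ := Dseq.split hρ
    have hρa' : ∀ x ∈ ρa, bel gt (κ2 ++ κ) x := by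
      intro x hx
      rcases Dseq.mem hρa x hx with h | h
      · rcases bel_append.1 h with h | h
        · exact bel_append.2 (Or.inr h)
        · exact bel_append.2 (Or.inl (bel_cover htrans h0 h))
      · exact bel_append.2 (Or.inl (h0 x h))
    have hσ0cover : ∀ e ∈ κ ++ σ0, bel gt (κ2 ++ κ) e ∨ e ∈ (κ2 ++ κ) := by
      intro e he
      rcases List.mem_append.1 he with he | he
      · exact Or.inr (by simp [he])
      · exact Or.inl (bel_append.2 (Or.inl (h0 e he)))
    -- covering of bel (κ ++ σ0) by bel (κ2 ++ κ)
    have hcov : ∀ x, bel gt (κ ++ σ0) x → bel gt (κ2 ++ κ) x := by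
      intro x hx
      obtain ⟨e, he, hgt⟩ := hx
      rcases List.mem_append.1 he with he | he
      · exact bel_append.2 (Or.inr ⟨e, he, hgt⟩)
      · exact bel_append.2 (Or.inl (bel_cover htrans (fun f hf => h0 f hf) ⟨e, he, hgt⟩))
    rcases hB with rfl | rfl
    · -- no b step in σ
      simp only [List.nil_append] at hρbc
      have hrec := IH hρbc
      have hrec2 : Dseq gt ((κ2 ++ κ) ++ [b]) lam ρbc := by
        refine Dseq.mono ?_ hrec
        intro x hx
        rcases bel_append.1 hx with hx | hx
        · rcases bel_append.1 hx with hx | hx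
          · exact bel_append.2 (Or.inl (bel_append.2 (Or.inl hx)))
          · obtain ⟨e, he, hgt⟩ := hx
            simp at he
            exact bel_append.2 (Or.inr ⟨e, by simp [he], hgt⟩)
        · exact bel_append.2 (Or.inl (hcov x hx))
      have := Dseq.cons (gt := gt) (κ2 ++ κ) b lam ρa [] ρbc hρa' (Or.inl rfl) hrec2
      simpa using this
    · -- b step present in σ
      obtain ⟨ρb', ρc, rfl, hρb', hρc⟩ := Dseq.split hρbc
      cases hρb' with
      | cons _ _ _ q0 B' q1 hq0 hB' hq1 =>
        cases hq1 with
        | nil _ _ hq1mem =>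
          have hrec := IH hρc
          have hrec2 : Dseq gt ((κ2 ++ κ) ++ [b]) lam ρc := by
            refine Dseq.mono ?_ hrec
            intro x hx
            rcases bel_append.1 hx with hx | hx
            · rcases bel_append.1 hx with hx | hx
              · exact bel_append.2 (Or.inl (bel_append.2 (Or.inl hx)))
              · obtain ⟨e, he, hgt⟩ := hx
                simp at he
                exact bel_append.2 (Or.inr ⟨e, by simp [he], hgt⟩)
            · -- bel ((κ ++ σ0) ++ [b]) x
              rcases bel_append.1 hx with hx | hx
              · exact bel_append.2 (Or.inl (hcov x hx))
              · obtain ⟨e, he, hgt⟩ := hx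
                simp at he
                exact bel_append.2 (Or.inr ⟨e, by simp [he], hgt⟩)
          have hq1' : ∀ x ∈ q1, bel gt ((κ2 ++ κ) ++ [b]) x := by
            intro x hx
            have := hq1mem x hx
            rcases bel_append.1 this with h | h
            · exact bel_append.2 (Or.inl (hcov x h))
            · exact bel_append.2 (Or.inr h)
          have hfin : Dseq gt ((κ2 ++ κ) ++ [b]) lam (q1 ++ ρc) :=
            Dseq.prefix_bel hq1' hrec2
          have hq0' : ∀ x ∈ ρa ++ q0, bel gt (κ2 ++ κ) x := by
            intro x hx
            rcases List.mem_append.1 hx with hx | hx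
            · exact hρa' x hx
            · exact hcov x (hq0 x hx)
          have := Dseq.cons (gt := gt) (κ2 ++ κ) b lam (ρa ++ q0) B' (q1 ++ ρc)
            hq0' hB' hfin
          have heq : (ρa ++ q0) ++ (B' ++ (q1 ++ ρc))
              = ρa ++ ((q0 ++ (B' ++ q1)) ++ ρc) := by simp [List.append_assoc]
          rwa [heq] at this

end


section NuDD
variable {I : Type*} {gt : I → I → Prop} (hwf : WellFounded fun a b => gt b a) (htrans : Transitive gt)

include htrans in
/-- key bound: a sequence in `D(κ, lam)` has measure at most that of `lam`,
relative to any downward-closed filter covering `⇣κ`. -/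
theorem nu_dd {κ lam ρ : List I} (hd : Dseq gt κ lam ρ) :
    ∀ (P : I → Prop), (∀ x, bel gt κ x → P x) → (∀ x y, P x → gt x y → P y) →
    nu hwf P ρ ≤ nu hwf P lam := by
  induction hd with
  | nil κ ρ hρ =>
    intro P hcov hdc
    rw [nu_all hwf (fun x hx => hcov x (hρ x hx)), nu_nil]
  | cons κ b lam ρ0 B ρ1 h0 hB h1 IH =>
    intro P hcov hdc
    rw [nu_skip hwf (fun x hx => hcov x (h0 x hx))]
    have hcov' : ∀ x, bel gt (κ ++ [b]) x → (P x ∨ gt b x) := by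
      intro x hx
      obtain ⟨e, he, hgt⟩ := hx
      rcases List.mem_append.1 he with he | he
      · exact Or.inl (hcov x ⟨e, he, hgt⟩)
      · simp at he
        subst he
        exact Or.inr hgt
    have hdc' : ∀ x y, (P x ∨ gt b x) → gt x y → (P y ∨ gt b y) := by
      rintro x y (h | h) hxy
      · exact Or.inl (hdc x y h hxy)
      · exact Or.inr (htrans h hxy)
    have hIH := IH (fun x => P x ∨ gt b x) hcov' hdc'
    by_cases hPb : P b
    · -- b is filtered; P ∨ <b ≡ P by downward closure
      have hPeq : ∀ x, (P x ∨ gt b x) ↔ P x := by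
        intro x
        constructor
        · rintro (h | h)
          · exact h
          · exact hdc b x hPb h
        · exact Or.inl
      rw [nu_congr hwf hPeq ρ1, nu_congr hwf hPeq lam] at hIH
      rw [nu_cons_pos hwf hPb]
      rcases hB with rfl | rfl
      · simpa using hIH
      · rw [List.singleton_append, nu_cons_pos hwf hPb]
        exact hIH
    · rw [nu_cons_neg hwf hPb]
      rcases hB with rfl | rfl
      · -- skipped b-step
        simp only [List.nil_append]
        obtain ⟨z, hz, hle⟩ := nu_unfilter hwf htrans b ρ1 P
        calc nu hwf P ρ1 ≤ nu hwf (fun x => P x ∨ gt b x) ρ1 + z := hle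
          _ ≤ nu hwf (fun x => P x ∨ gt b x) lam + z := add_le_add_left hIH z
          _ ≤ nu hwf (fun x => P x ∨ gt b x) lam + wt hwf b := add_le_add_right hz.le _
          _ = wt hwf b + nu hwf (fun x => P x ∨ gt b x) lam := by abel
      · rw [List.singleton_append, nu_cons_neg hwf hPb]
        exact add_le_add_right hIH _


end NuDD

section
variable {A I : Type*} {r : I → A → A → Prop} {gt : I → I → Prop}

/-- labelled multistep reduction -/
inductive Red (r : I → A → A → Prop) : List I → A → A → Prop
  | nil (s) : Red r [] s s
  | cons {c L s t u} (h : r c s t) (h2 : Red r L t u) : Red r (c :: L) s u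

theorem Red.append : ∀ {L1 L2 : List I} {s t u : A},
    Red r L1 s t → Red r L2 t u → Red r (L1 ++ L2) s u := by
  intro L1
  induction L1 with
  | nil => intro L2 s t u h1 h2; cases h1; exact h2
  | cons c L IH =>
    intro L2 s t u h1 h2
    cases h1 with
    | cons hc hL => exact Red.cons hc (IH hL h2)

theorem Red.to_rtg {L : List I} {s t : A} (h : Red r L s t) :
    Relation.ReflTransGen (unionRel r) s t := by
  induction h with
  | nil => exact Relation.ReflTransGen.refl
  | cons hc _ IH => exact Relation.ReflTransGen.head ⟨_, hc⟩ IH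

theorem rtg_to_red {s t : A} (h : Relation.ReflTransGen (unionRel r) s t) :
    ∃ L, Red r L s t := by
  induction h with
  | refl => exact ⟨[], Red.nil s⟩
  | tail _ hstep IH =>
    obtain ⟨L, hL⟩ := IH
    obtain ⟨c, hc⟩ := hstep
    exact ⟨L ++ [c], hL.append (Red.cons hc (Red.nil _))⟩

theorem below_rtg_to_red {a : I} {s t : A}
    (h : Relation.ReflTransGen (below r gt a) s t) :
    ∃ L, Red r L s t ∧ ∀ c ∈ L, gt a c := by
  induction h with
  | refl => exact ⟨[], Red.nil s, by simp⟩
  | tail _ hstep IH =>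
    obtain ⟨L, hL, hmem⟩ := IH
    obtain ⟨c, hgc, hc⟩ := hstep
    refine ⟨L ++ [c], hL.append (Red.cons hc (Red.nil _)), ?_⟩
    intro d hd
    rcases List.mem_append.1 hd with hd | hd
    · exact hmem d hd
    · simp at hd
      subst hd
      exact hgc

theorem below2_rtg_to_red {a b : I} {s t : A}
    (h : Relation.ReflTransGen (fun x y => below r gt a x y ∨ below r gt b x y) s t) :
    ∃ L, Red r L s t ∧ ∀ c ∈ L, gt a c ∨ gt b c := by
  induction h with
  | refl => exact ⟨[], Red.nil s, by simp⟩
  | tail _ hstep IH =>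
    obtain ⟨L, hL, hmem⟩ := IH
    obtain ⟨c, hgc, hc⟩ : ∃ c, (gt a c ∨ gt b c) ∧ r c _ _ := by
      rcases hstep with ⟨c, hgc, hc⟩ | ⟨c, hgc, hc⟩
      · exact ⟨c, Or.inl hgc, hc⟩
      · exact ⟨c, Or.inr hgc, hc⟩
    refine ⟨L ++ [c], hL.append (Red.cons hc (Red.nil _)), ?_⟩
    intro d hd
    rcases List.mem_append.1 hd with hd | hd
    · exact hmem d hd
    · simp at hd
      subst hd
      exact hgc

theorem reflgen_to_red {b : I} {s t : A} (h : Relation.ReflGen (r b) s t) :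
    ∃ B, Red r B s t ∧ (B = [] ∨ B = [b]) := by
  cases h with
  | refl => exact ⟨[], Red.nil s, Or.inl rfl⟩
  | single hstep => exact ⟨[b], Red.cons hstep (Red.nil _), Or.inr rfl⟩


end

section Main
variable {A I : Type*} {r : I → A → A → Prop} {gt : I → I → Prop}

theorem main_lemma (hwf : WellFounded (fun a b => gt b a)) (htrans : Transitive gt)
    (hLD : ∀ α β s t u, r α s t → r β s u →
      ∃ t₁ t₂ u₁ u₂ v,
        Relation.ReflTransGen (below r gt α) t t₁ ∧
        Relation.ReflGen (r β) t₁ t₂ ∧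
        Relation.ReflTransGen (fun a b => below r gt α a b ∨ below r gt β a b) t₂ v ∧
        Relation.ReflTransGen (below r gt β) u u₁ ∧
        Relation.ReflGen (r α) u₁ u₂ ∧
        Relation.ReflTransGen (fun a b => below r gt α a b ∨ below r gt β a b) u₂ v) :
    ∀ (o : NatOrdinal) (κ lam : List I) (s t u : A),
      nu hwf (fun _ => False) κ + nu hwf (fun _ => False) lam ≤ o →
      Red r κ s t → Red r lam s u →
      ∃ v ρ ρ', Red r ρ t v ∧ Red r ρ' u v ∧ Dseq gt κ lam ρ ∧ Dseq gt lam κ ρ' := by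
  intro o
  induction o using NatOrdinal.induction with
  | _ o IH =>
  intro κ lam s t u hmeas hκ hlam
  cases hκ with
  | nil =>
    exact ⟨u, lam, [], hlam, Red.nil u, Dseq.self _ _, Dseq.nil _ _ (by simp)⟩
  | @cons a κ' _ t1 _ ha hκ' =>
    cases hlam with
    | nil =>
      exact ⟨t, [], a :: κ', Red.nil t, Red.cons ha hκ', Dseq.nil _ _ (by simp),
        Dseq.self _ _⟩
    | @cons b lam' _ u1 _ hb hlam' =>
      -- the local decreasing diagram
      obtain ⟨t₁, t₂, u₁, u₂, v1, hld1, hld2, hld3, hld4, hld5, hld6⟩ :=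
        hLD a b s t1 u1 ha hb
      obtain ⟨LA, hRedA, hmemA⟩ := below_rtg_to_red hld1
      obtain ⟨LB, hRedB, hBor⟩ := reflgen_to_red hld2
      obtain ⟨LC, hRedC, hmemC⟩ := below2_rtg_to_red hld3
      obtain ⟨LA', hRedA', hmemA'⟩ := below_rtg_to_red hld4
      obtain ⟨LB', hRedB', hB'or⟩ := reflgen_to_red hld5
      obtain ⟨LC', hRedC', hmemC'⟩ := below2_rtg_to_red hld6
      set σ1 := LA ++ (LB ++ LC) with hσ1def
      set τ1 := LA' ++ (LB' ++ LC') with hτ1def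
      have hRedσ1 : Red r σ1 t1 v1 := hRedA.append (hRedB.append hRedC)
      have hRedτ1 : Red r τ1 u1 v1 := hRedA'.append (hRedB'.append hRedC')
      have hDσ1 : Dseq gt [a] [b] σ1 := by
        refine Dseq.cons _ _ _ _ _ _ (fun x hx => ⟨a, by simp, hmemA x hx⟩) hBor ?_
        refine Dseq.nil _ _ fun x hx => ?_
        rcases hmemC x hx with h | h
        · exact ⟨a, by simp, h⟩
        · exact ⟨b, by simp, h⟩
      have hDτ1 : Dseq gt [b] [a] τ1 := by
        refine Dseq.cons _ _ _ _ _ _ (fun x hx => ⟨b, by simp, hmemA' x hx⟩) hB'or ?_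
        refine Dseq.nil _ _ fun x hx => ?_
        rcases hmemC' x hx with h | h
        · exact ⟨a, by simp, h⟩
        · exact ⟨b, by simp, h⟩
      -- abbreviations for measures
      have hbotfalse : ∀ (c : I), ¬ (fun (_ : I) => False) c := fun _ h => h
      have hbotcons : ∀ (c : I) (L : List I),
          nu hwf (fun _ => False) (c :: L) = wt hwf c + nu hwf (fun x => gt c x) L := by
        intro c L
        rw [nu_cons_neg hwf (hbotfalse c)]
        congr 1
        exact nu_congr hwf (by simp) L
      have hnu_bot : ∀ (c : I) (L : List I), ∃ z, z < wt hwf c ∧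
          nu hwf (fun _ => False) L ≤ nu hwf (fun x => gt c x) L + z := by
        intro c L
        obtain ⟨z, hz, hle⟩ := nu_unfilter hwf htrans c L (fun _ => False)
        exact ⟨z, hz, by rwa [nu_congr hwf (by simp : ∀ x, ((fun (_ : I) => False) x ∨ gt c x) ↔ gt c x) L] at hle⟩
      have hdc_a : ∀ x y, gt a x → gt x y → gt a y := fun x y h1 h2 => htrans h1 h2
      have hdc_b : ∀ x y, gt b x → gt x y → gt b y := fun x y h1 h2 => htrans h1 h2
      have hbel_a : ∀ x, bel gt [a] x → gt a x := by
        rintro x ⟨e, he, hgt⟩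
        simp at he
        subst he
        exact hgt
      have hbel_b : ∀ x, bel gt [b] x → gt b x := by
        rintro x ⟨e, he, hgt⟩
        simp at he
        subst he
        exact hgt
      -- measure of the full peak
      have hM : (wt hwf a + nu hwf (fun x => gt a x) κ')
          + (wt hwf b + nu hwf (fun x => gt b x) lam') ≤ o := by
        rw [← hbotcons a κ', ← hbotcons b lam']
        exact hmeas
      set Ka := nu hwf (fun x => gt a x) κ' with hKadef
      set Lb := nu hwf (fun x => gt b x) lam' with hLbdef
      -- subpeak 1 : (κ', σ1) at t1
      obtain ⟨z1, hz1, hle1⟩ := hnu_bot a κ'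
      obtain ⟨z2, hz2, hle2⟩ := hnu_bot a σ1
      have hσ1a : nu hwf (fun x => gt a x) σ1 ≤ wt hwf b :=
        (nu_dd hwf htrans hDσ1 _ hbel_a hdc_a).trans (nu_single_le hwf _ b)
      have hsub1 : nu hwf (fun _ => False) κ' + nu hwf (fun _ => False) σ1 < o := by
        have h1 : nu hwf (fun _ => False) κ' + nu hwf (fun _ => False) σ1
            ≤ (Ka + z1) + ((wt hwf b + z2)) :=
          add_le_add hle1 (hle2.trans (add_le_add_left hσ1a z2))
        have h2 : (Ka + z1) + (wt hwf b + z2) = (Ka + wt hwf b) + (z1 + z2) := by abel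
        have h3 : (Ka + wt hwf b) + (z1 + z2) < (Ka + wt hwf b) + (wt hwf a + Lb) :=
          add_lt_add_right (lt_of_lt_of_le (wt_princ hwf hz1 hz2) (natord_le_self_add _ _)) _
        have h4 : (Ka + wt hwf b) + (wt hwf a + Lb)
            = (wt hwf a + Ka) + (wt hwf b + Lb) := by abel
        calc nu hwf (fun _ => False) κ' + nu hwf (fun _ => False) σ1
            ≤ (Ka + wt hwf b) + (z1 + z2) := h2 ▸ h1
          _ < (Ka + wt hwf b) + (wt hwf a + Lb) := h3
          _ = (wt hwf a + Ka) + (wt hwf b + Lb) := h4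
          _ ≤ o := hM
      obtain ⟨w1, ρ1, ρ1', hRedρ1, hRedρ1', hD1, hD1'⟩ :=
        IH _ hsub1 κ' σ1 t1 t v1 le_rfl hκ' hRedσ1
      -- subpeak 2 : (lam', τ1) at u1
      obtain ⟨z3, hz3, hle3⟩ := hnu_bot b lam'
      obtain ⟨z4, hz4, hle4⟩ := hnu_bot b τ1
      have hτ1b : nu hwf (fun x => gt b x) τ1 ≤ wt hwf a :=
        (nu_dd hwf htrans hDτ1 _ hbel_b hdc_b).trans (nu_single_le hwf _ a)
      have hsub2 : nu hwf (fun _ => False) lam' + nu hwf (fun _ => False) τ1 < o := by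
        have h1 : nu hwf (fun _ => False) lam' + nu hwf (fun _ => False) τ1
            ≤ (Lb + z3) + (wt hwf a + z4) :=
          add_le_add hle3 (hle4.trans (add_le_add_left hτ1b z4))
        have h2 : (Lb + z3) + (wt hwf a + z4) = (Lb + wt hwf a) + (z3 + z4) := by abel
        have h3 : (Lb + wt hwf a) + (z3 + z4) < (Lb + wt hwf a) + (wt hwf b + Ka) :=
          add_lt_add_right (lt_of_lt_of_le (wt_princ hwf hz3 hz4) (natord_le_self_add _ _)) _
        have h4 : (Lb + wt hwf a) + (wt hwf b + Ka)
            = (wt hwf a + Ka) + (wt hwf b + Lb) := by abel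
        calc nu hwf (fun _ => False) lam' + nu hwf (fun _ => False) τ1
            ≤ (Lb + wt hwf a) + (z3 + z4) := h2 ▸ h1
          _ < (Lb + wt hwf a) + (wt hwf b + Ka) := h3
          _ = (wt hwf a + Ka) + (wt hwf b + Lb) := h4
          _ ≤ o := hM
      obtain ⟨w2, ρ2, ρ2', hRedρ2, hRedρ2', hD2, hD2'⟩ :=
        IH _ hsub2 lam' τ1 u1 u v1 le_rfl hlam' hRedτ1
      -- element classification for σ1 and τ1
      have hmemσ1 : ∀ e ∈ σ1, gt a e ∨ e = b ∨ gt b e := by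
        intro e he
        rcases List.mem_append.1 he with he | he
        · exact Or.inl (hmemA e he)
        · rcases List.mem_append.1 he with he | he
          · rcases hBor with rfl | rfl
            · simp at he
            · simp at he
              exact Or.inr (Or.inl he)
          · rcases hmemC e he with h | h
            · exact Or.inl h
            · exact Or.inr (Or.inr h)
      have hmemτ1 : ∀ e ∈ τ1, gt b e ∨ e = a ∨ gt a e := by
        intro e he
        rcases List.mem_append.1 he with he | he
        · exact Or.inl (hmemA' e he)
        · rcases List.mem_append.1 he with he | he
          · rcases hB'or with rfl | rfl
            · simp at he
            · simp at he
              exact Or.inr (Or.inl he)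
          · rcases hmemC' e he with h | h
            · exact Or.inr (Or.inr h)
            · exact Or.inl h
      have hbelσ1 : ∀ x, bel gt σ1 x → gt a x ∨ gt b x := by
        rintro x ⟨e, he, hgt⟩
        rcases hmemσ1 e he with h | h | h
        · exact Or.inl (htrans h hgt)
        · subst h
          exact Or.inr hgt
        · exact Or.inr (htrans h hgt)
      have hbelτ1 : ∀ x, bel gt τ1 x → gt a x ∨ gt b x := by
        rintro x ⟨e, he, hgt⟩
        rcases hmemτ1 e he with h | h | h
        · exact Or.inr (htrans h hgt)
        · subst h
          exact Or.inl hgt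
        · exact Or.inl (htrans h hgt)
      have hPabdc : ∀ x y, (gt a x ∨ gt b x) → gt x y → (gt a y ∨ gt b y) := by
        rintro x y (h | h) hxy
        · exact Or.inl (htrans h hxy)
        · exact Or.inr (htrans h hxy)
      have hPbadc : ∀ x y, (gt b x ∨ gt a x) → gt x y → (gt b y ∨ gt a y) := by
        rintro x y (h | h) hxy
        · exact Or.inl (htrans h hxy)
        · exact Or.inr (htrans h hxy)
      -- subpeak 3 : (ρ1', ρ2') at v1
      obtain ⟨za, hza, hlea⟩ := hnu_bot a ρ1'
      obtain ⟨zb, hzb, hleb⟩ := nu_unfilter hwf htrans b ρ1' (fun x => gt a x)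
      obtain ⟨za', hza', hlea'⟩ := hnu_bot b ρ2'
      obtain ⟨zb', hzb', hleb'⟩ := nu_unfilter hwf htrans a ρ2' (fun x => gt b x)
      have hρ1'P : nu hwf (fun x => gt a x ∨ gt b x) ρ1' ≤ Ka :=
        (nu_dd hwf htrans hD1' _ hbelσ1 hPabdc).trans
          (nu_anti hwf htrans κ' (fun x => Or.inl))
      have hbelτ1' : ∀ x, bel gt τ1 x → gt b x ∨ gt a x := fun x h => (hbelτ1 x h).symm
      have hρ2'P : nu hwf (fun x => gt b x ∨ gt a x) ρ2' ≤ Lb :=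
        (nu_dd hwf htrans hD2' _ hbelτ1' hPbadc).trans
          (nu_anti hwf htrans lam' (fun x => Or.inl))
      have hρ1'bound : nu hwf (fun _ => False) ρ1' ≤ (Ka + zb) + za :=
        hlea.trans (add_le_add_left (hleb.trans (add_le_add_left hρ1'P zb)) za)
      have hρ2'bound : nu hwf (fun _ => False) ρ2' ≤ (Lb + zb') + za' :=
        hlea'.trans (add_le_add_left (hleb'.trans (add_le_add_left hρ2'P zb')) za')
      have hsub3 : nu hwf (fun _ => False) ρ1' + nu hwf (fun _ => False) ρ2' < o := by
        have h1 : nu hwf (fun _ => False) ρ1' + nu hwf (fun _ => False) ρ2'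
            ≤ ((Ka + zb) + za) + ((Lb + zb') + za') := add_le_add hρ1'bound hρ2'bound
        have h2 : ((Ka + zb) + za) + ((Lb + zb') + za')
            = (Ka + Lb) + ((za + zb') + (zb + za')) := by abel
        have h3 : (Ka + Lb) + ((za + zb') + (zb + za'))
            < (Ka + Lb) + (wt hwf a + wt hwf b) :=
          add_lt_add_right (add_lt_add (wt_princ hwf hza hzb') (wt_princ hwf hzb hza')) _
        have h4 : (Ka + Lb) + (wt hwf a + wt hwf b)
            = (wt hwf a + Ka) + (wt hwf b + Lb) := by abel
        calc nu hwf (fun _ => False) ρ1' + nu hwf (fun _ => False) ρ2'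
            ≤ (Ka + Lb) + ((za + zb') + (zb + za')) := h2 ▸ h1
          _ < (Ka + Lb) + (wt hwf a + wt hwf b) := h3
          _ = (wt hwf a + Ka) + (wt hwf b + Lb) := h4
          _ ≤ o := hM
      obtain ⟨v, ρ3, ρ3', hRedρ3, hRedρ3', hD3, hD3'⟩ :=
        IH _ hsub3 ρ1' ρ2' v1 w1 w2 le_rfl hRedρ1' hRedρ2'
      -- assemble the final valleys
      refine ⟨v, ρ1 ++ ρ3, ρ2 ++ ρ3', hRedρ1.append hRedρ3, hRedρ2.append hRedρ3', ?_, ?_⟩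
      · -- Dseq gt (a :: κ') (b :: lam') (ρ1 ++ ρ3)
        have hcomp1 : Dseq gt ([a] ++ κ') [b] ρ1 := Dseq.comp htrans hDσ1 hD1
        have hcomp3 : Dseq gt (τ1 ++ ρ1') lam' ρ3 := Dseq.comp htrans hD2' hD3
        have hmono3 : Dseq gt ((a :: κ') ++ [b]) lam' ρ3 := by
          refine Dseq.mono ?_ hcomp3
          rintro x ⟨e, he, hgt⟩
          rcases List.mem_append.1 he with he | he
          · rcases hmemτ1 e he with h | h | h
            · exact ⟨b, by simp, htrans h hgt⟩
            · exact ⟨a, by simp, h ▸ hgt⟩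
            · exact ⟨a, by simp, htrans h hgt⟩
          · rcases Dseq.mem hD1' e he with h | h
            · obtain ⟨f, hf, hgt2⟩ := h
              rcases List.mem_append.1 hf with hf | hf
              · rcases hmemσ1 f hf with h | h | h
                · exact ⟨a, by simp, htrans h (htrans hgt2 hgt)⟩
                · exact ⟨b, by simp, (h ▸ htrans hgt2 hgt : gt b x)⟩
                · exact ⟨b, by simp, htrans h (htrans hgt2 hgt)⟩
              · exact ⟨f, by simp [hf], htrans hgt2 hgt⟩
            · exact ⟨e, by simp [h], hgt⟩
        exact Dseq.append_one (by simpa using hcomp1) hmono3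
      · -- Dseq gt (b :: lam') (a :: κ') (ρ2 ++ ρ3')
        have hcomp2 : Dseq gt ([b] ++ lam') [a] ρ2 := Dseq.comp htrans hDτ1 hD2
        have hcomp3' : Dseq gt (σ1 ++ ρ2') κ' ρ3' := Dseq.comp htrans hD1' hD3'
        have hmono3' : Dseq gt ((b :: lam') ++ [a]) κ' ρ3' := by
          refine Dseq.mono ?_ hcomp3'
          rintro x ⟨e, he, hgt⟩
          rcases List.mem_append.1 he with he | he
          · rcases hmemσ1 e he with h | h | h
            · exact ⟨a, by simp, htrans h hgt⟩
            · exact ⟨b, by simp, h ▸ hgt⟩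
            · exact ⟨b, by simp, htrans h hgt⟩
          · rcases Dseq.mem hD2' e he with h | h
            · obtain ⟨f, hf, hgt2⟩ := h
              rcases List.mem_append.1 hf with hf | hf
              · rcases hmemτ1 f hf with h | h | h
                · exact ⟨b, by simp, htrans h (htrans hgt2 hgt)⟩
                · exact ⟨a, by simp, (h ▸ htrans hgt2 hgt : gt a x)⟩
                · exact ⟨a, by simp, htrans h (htrans hgt2 hgt)⟩
              · exact ⟨f, by simp [hf], htrans hgt2 hgt⟩
            · exact ⟨e, by simp [h], hgt⟩
        exact Dseq.append_one (by simpa using hcomp2) hmono3'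

end Main

end LDDproof

/-- Every locally decreasing ARS is confluent: if `>` (here `gt`) is a well-founded
strict order on the index set `I` and every local peak `t ←_α s →_β u` can be
completed in the locally decreasing fashion
`⇣_α^* · →_β^= · ⇣_{αβ}^*` from `t`, meeting `⇣_β^* · →_α^= · ⇣_{αβ}^*` from `u`,
then the union of all the relations `→_α` is confluent. -/
theorem locally_decreasing_implies_confluent {A I : Type*}
    (r : I → A → A → Prop) (gt : I → I → Prop)
    (hwf : WellFounded (fun a b => gt b a))
    (htrans : Transitive gt) (hirr : Irreflexive gt)
    (hLD : ∀ α β s t u, r α s t → r β s u →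
      ∃ t₁ t₂ u₁ u₂ v,
        ReflTransGen (below r gt α) t t₁ ∧
        ReflGen (r β) t₁ t₂ ∧
        ReflTransGen (fun a b => below r gt α a b ∨ below r gt β a b) t₂ v ∧
        ReflTransGen (below r gt β) u u₁ ∧
        ReflGen (r α) u₁ u₂ ∧
        ReflTransGen (fun a b => below r gt α a b ∨ below r gt β a b) u₂ v) :
    Confluent (unionRel r) := by
  intro s t u h1 h2
  obtain ⟨κ, hκ⟩ := LDDproof.rtg_to_red h1
  obtain ⟨lam, hlam⟩ := LDDproof.rtg_to_red h2
  obtain ⟨v, ρ, ρ', hρ, hρ', -, -⟩ := LDDproof.main_lemma hwf htrans hLD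
    (LDDproof.nu hwf (fun _ => False) κ + LDDproof.nu hwf (fun _ => False) lam)
    κ lam s t u le_rfl hκ hlam
  exact ⟨v, hρ.to_rtg, hρ'.to_rtg⟩
end

section
/- Every extended locally decreasing abstract rewrite system is confluent. That is, if ⟨A, {→_α}_{α∈I}⟩ is an ARS, > is a well-founded strict order on I, and ≥ is a quasi-order on I satisfying ≥ · > · ≥ ⊆ >, such that LD_{(>,≥)}(α,β) holds for all α, β ∈ I, then the union → of all the relations →_α is confluent. -/
open Relation

/-- `⇣̂_α`: the union of `→_β` over all labels `β` with `β ≤ α` (i.e. `ge α β`)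
or `β < α` (i.e. `gt α β`).  Note `>` need not be contained in `≥`. -/
def belowEq {A I : Type*} (r : I → A → A → Prop) (gt ge : I → I → Prop) (α : I) :
    A → A → Prop :=
  fun a b => ∃ β, (ge α β ∨ gt α β) ∧ r β a b

set_option linter.unusedSectionVars false
set_option linter.unusedVariables false
set_option maxHeartbeats 1000000

namespace ELDLemmas


variable {L : Type*} [LinearOrder L]

/-- A "max-first" comparison of multisets over a linear order: `M` is smaller than `N`
if at the largest element where the counts differ, `M` has fewer copies.  For a
well-founded linear order this coincides with the Dershowitz–Manna order. -/
def DMLT (M N : Multiset L) : Prop :=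
  ∃ x, M.count x < N.count x ∧ ∀ y, x < y → M.count y = N.count y

def DMLE (M N : Multiset L) : Prop := M = N ∨ DMLT M N

theorem dmle_refl (M : Multiset L) : DMLE M M := Or.inl rfl

theorem dmle_of_eq {M N : Multiset L} (h : M = N) : DMLE M N := Or.inl h

theorem dmlt_wf (hw : WellFounded ((· < ·) : L → L → Prop)) : WellFounded (DMLT (L := L)) := by
  classical
  have htri : IsTrichotomous L (fun x y : L => y < x) :=
    ⟨fun a b => by rcases lt_trichotomy b a with h | h | h <;> tauto⟩
  have hsw : WellFounded (Function.swap (fun x y : L => y < x)) := by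
    have : Function.swap (fun x y : L => y < x) = ((· < ·) : L → L → Prop) := rfl
    rw [this]; exact hw
  have h : WellFounded (Finsupp.Lex (fun x y : L => y < x) (fun m n : ℕ => m < n)) :=
    Finsupp.Lex.wellFounded' (fun n h => Nat.not_lt_zero n h) Nat.lt_wfRel.wf hsw
  have h2 : WellFounded
      (InvImage (Finsupp.Lex (fun x y : L => y < x) (fun m n : ℕ => m < n))
        (fun M : Multiset L => M.toFinsupp)) := InvImage.wf _ h
  refine Subrelation.wf ?_ h2
  rintro M N ⟨x, hlt, heq⟩
  refine Finsupp.lex_def.2 ⟨x, fun d hd => ?_, ?_⟩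
  · simp only [Multiset.toFinsupp_apply]; exact heq d hd
  · simp only [Multiset.toFinsupp_apply]; exact hlt

theorem dmlt_trans {M N P : Multiset L} (h1 : DMLT M N) (h2 : DMLT N P) : DMLT M P := by
  obtain ⟨x₁, hx₁, he₁⟩ := h1
  obtain ⟨x₂, hx₂, he₂⟩ := h2
  rcases lt_trichotomy x₁ x₂ with h | h | h
  · exact ⟨x₂, by rw [he₁ x₂ h]; exact hx₂, fun y hy => (he₁ y (h.trans hy)).trans (he₂ y hy)⟩
  · exact ⟨x₁, by subst h; exact hx₁.trans hx₂, fun y hy => (he₁ y hy).trans (he₂ y (h ▸ hy))⟩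
  · exact ⟨x₁, by rw [← he₂ x₁ h]; exact hx₁, fun y hy => (he₁ y hy).trans (he₂ y (h.trans hy))⟩

theorem DMLE.trans {M N P : Multiset L} (h1 : DMLE M N) (h2 : DMLE N P) : DMLE M P := by
  rcases h1 with rfl | h1
  · exact h2
  rcases h2 with rfl | h2
  · exact Or.inr h1
  · exact Or.inr (dmlt_trans h1 h2)

theorem dmlt_of_dmle_of_dmlt {M N P : Multiset L} (h1 : DMLE M N) (h2 : DMLT N P) : DMLT M P := by
  rcases h1 with rfl | h1
  · exact h2
  · exact dmlt_trans h1 h2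

theorem dmlt_of_dmlt_of_dmle {M N P : Multiset L} (h1 : DMLT M N) (h2 : DMLE N P) : DMLT M P := by
  rcases h2 with rfl | h2
  · exact h1
  · exact dmlt_trans h1 h2

theorem dmlt_add_right {M N : Multiset L} (K : Multiset L) (h : DMLT M N) :
    DMLT (M + K) (N + K) := by
  obtain ⟨x, hx, he⟩ := h
  exact ⟨x, by simpa using hx, fun y hy => by simp [he y hy]⟩

theorem dmlt_add_left {M N : Multiset L} (K : Multiset L) (h : DMLT M N) :
    DMLT (K + M) (K + N) := by
  rw [add_comm K M, add_comm K N]; exact dmlt_add_right K h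

theorem dmle_add {M N M' N' : Multiset L} (h : DMLE M N) (h' : DMLE M' N') :
    DMLE (M + M') (N + N') := by
  rcases h with rfl | h
  · rcases h' with rfl | h'
    · exact dmle_refl _
    · exact Or.inr (dmlt_add_left M h')
  · rcases h' with rfl | h'
    · exact Or.inr (dmlt_add_right M' h)
    · exact Or.inr (dmlt_trans (dmlt_add_right M' h) (dmlt_add_left N h'))

theorem dmlt_add' {M N M' N' : Multiset L} (h : DMLT M N) (h' : DMLE M' N') :
    DMLT (M + M') (N + N') := by
  rcases h' with rfl | h'
  · exact dmlt_add_right M' h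
  · exact dmlt_trans (dmlt_add_right M' h) (dmlt_add_left N h')

theorem dmle_cancel {K M N : Multiset L} (h : DMLE (K + M) (K + N)) : DMLE M N := by
  rcases h with h | ⟨x, hx, he⟩
  · exact Or.inl (by
      have := congrArg (fun M => M - K) h
      simpa using this)
  · refine Or.inr ⟨x, ?_, fun y hy => ?_⟩
    · have := hx; simp only [Multiset.count_add] at this; omega
    · have := he y hy; simp only [Multiset.count_add] at this; omega

/-- The crucial "domination" constructor for the multiset order. -/
theorem dmlt_of_dom {C W Z : Multiset L} (hZ : Z ≠ 0)
    (hdom : ∀ w ∈ W, ∃ z ∈ Z, w < z) : DMLT (C + W) (C + Z) := by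
  classical
  obtain ⟨z₀, hz₀, hz₀max⟩ : ∃ z₀ ∈ Z, ∀ z ∈ Z, z ≤ z₀ := by
    have hne : Z.toFinset.Nonempty := by
      rcases Multiset.exists_mem_of_ne_zero hZ with ⟨z, hz⟩
      exact ⟨z, Multiset.mem_toFinset.2 hz⟩
    obtain ⟨z₀, hz₀, hmax⟩ := Z.toFinset.exists_max_image id hne
    exact ⟨z₀, Multiset.mem_toFinset.1 hz₀,
      fun z hz => hmax z (Multiset.mem_toFinset.2 hz)⟩
  have hWlt : ∀ w ∈ W, w < z₀ := by
    intro w hw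
    obtain ⟨z, hz, hwz⟩ := hdom w hw
    exact lt_of_lt_of_le hwz (hz₀max z hz)
  have hWz₀ : W.count z₀ = 0 := by
    rw [Multiset.count_eq_zero]
    intro h
    exact absurd rfl (hWlt z₀ h).ne
  refine ⟨z₀, ?_, fun y hy => ?_⟩
  · have : 0 < Z.count z₀ := Multiset.count_pos.2 hz₀
    simp only [Multiset.count_add, hWz₀]
    omega
  · have hWy : W.count y = 0 := by
      rw [Multiset.count_eq_zero]
      intro h
      exact absurd ((hWlt y h).trans hy) (lt_irrefl y)
    have hZy : Z.count y = 0 := by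
      rw [Multiset.count_eq_zero]
      intro h
      exact absurd (lt_of_le_of_lt (hz₀max y h) hy) (lt_irrefl y)
    simp only [Multiset.count_add, hWy, hZy]


theorem dmle_of_le {M N : Multiset L} (h : M ≤ N) : DMLE M N := by
  obtain ⟨K, rfl⟩ := Multiset.le_iff_exists_add.1 h
  rcases eq_or_ne K 0 with rfl | hK
  · simpa using dmle_refl M
  · refine Or.inr ?_
    have := dmlt_of_dom (C := M) (W := 0) (Z := K) hK (by simp)
    simpa using this

theorem dmle_of_dom {C W Z : Multiset L}
    (hdom : ∀ w ∈ W, ∃ z ∈ Z, w < z) : DMLE (C + W) (C + Z) := by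
  rcases eq_or_ne W 0 with rfl | hW
  · exact dmle_of_le (by simp)
  · rcases eq_or_ne Z 0 with rfl | hZ
    · obtain ⟨w, hw⟩ := Multiset.exists_mem_of_ne_zero hW
      obtain ⟨z, hz, -⟩ := hdom w hw
      simp at hz
    · exact Or.inr (dmlt_of_dom hZ hdom)

theorem dmle_exists_le {M N : Multiset L} (h : DMLE M N) {x : L} (hx : x ∈ M) :
    ∃ y ∈ N, x ≤ y := by
  rcases h with rfl | ⟨c, hc, he⟩
  · exact ⟨x, hx, le_refl x⟩
  by_cases hxc : x ≤ c
  · refine ⟨c, Multiset.count_pos.1 (by omega), hxc⟩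
  · push_neg at hxc
    have : M.count x = N.count x := he x hxc
    have hxN : x ∈ N := Multiset.count_pos.1 (by rw [← this]; exact Multiset.count_pos.2 hx)
    exact ⟨x, hxN, le_refl x⟩

/-! ### The threshold-filtered measure on lists of labels -/

variable (L) in
abbrev Thr := WithBot L

/-- Running maximum threshold after traversing a list of labels. -/
def Tm : Thr L → List L → Thr L
  | m, [] => m
  | m, l :: ls => Tm (max m ↑l) ls

/-- The multiset of "records" of a list of labels above a starting threshold:
a label is kept iff it is `≥` the maximum of the threshold and all earlier labels. -/
def Fm : Thr L → List L → Multiset L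
  | _, [] => 0
  | m, l :: ls => if m ≤ ↑l then l ::ₘ Fm (max m ↑l) ls else Fm (max m ↑l) ls

@[simp] theorem Tm_nil (m : Thr L) : Tm m [] = m := rfl
@[simp] theorem Fm_nil (m : Thr L) : Fm m [] = 0 := rfl
theorem Tm_cons (m : Thr L) (l : L) (ls : List L) : Tm m (l :: ls) = Tm (max m ↑l) ls := rfl
theorem Fm_cons (m : Thr L) (l : L) (ls : List L) :
    Fm m (l :: ls) = if m ≤ ↑l then l ::ₘ Fm (max m ↑l) ls else Fm (max m ↑l) ls := rfl

theorem Tm_append (m : Thr L) (xs ys : List L) : Tm m (xs ++ ys) = Tm (Tm m xs) ys := by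
  induction xs generalizing m with
  | nil => rfl
  | cons l ls ih => simp [Tm_cons, ih]

theorem Fm_append (m : Thr L) (xs ys : List L) :
    Fm m (xs ++ ys) = Fm m xs + Fm (Tm m xs) ys := by
  induction xs generalizing m with
  | nil => simp
  | cons l ls ih =>
    simp only [List.cons_append, Fm_cons, Tm_cons]
    by_cases h : m ≤ ↑l <;> simp [h, ih]

theorem le_Tm (m : Thr L) (ls : List L) : m ≤ Tm m ls := by
  induction ls generalizing m with
  | nil => exact le_refl m
  | cons l ls ih => exact le_trans (le_max_left _ _) (ih _)

theorem mem_le_Tm {l : L} {ls : List L} (h : l ∈ ls) (m : Thr L) : (l : Thr L) ≤ Tm m ls := by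
  induction ls generalizing m with
  | nil => simp at h
  | cons x xs ih =>
    rcases List.mem_cons.1 h with rfl | h
    · exact le_trans (le_max_right _ _) (le_Tm _ _)
    · exact ih h _

theorem Tm_le {c : Thr L} {ls : List L} (hls : ∀ l ∈ ls, (l : Thr L) ≤ c) {m : Thr L}
    (hm : m ≤ c) : Tm m ls ≤ c := by
  induction ls generalizing m with
  | nil => exact hm
  | cons l ls ih =>
    exact ih (fun x hx => hls x (List.mem_cons_of_mem _ hx))
      (max_le hm (hls l (List.mem_cons_self)))

theorem Tm_eq {m : Thr L} {ls : List L} (hls : ∀ l ∈ ls, (l : Thr L) ≤ m) : Tm m ls = m :=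
  le_antisymm (Tm_le hls (le_refl m)) (le_Tm m ls)

theorem Fm_mem {x : L} {m : Thr L} {ls : List L} (h : x ∈ Fm m ls) :
    x ∈ ls ∧ m ≤ (x : Thr L) := by
  induction ls generalizing m with
  | nil => simp [Fm_nil] at h
  | cons l ls ih =>
    rw [Fm_cons] at h
    by_cases hm : m ≤ ↑l
    · rw [if_pos hm] at h
      rcases Multiset.mem_cons.1 h with rfl | h
      · exact ⟨List.mem_cons_self, hm⟩
      · obtain ⟨h1, h2⟩ := ih h
        exact ⟨List.mem_cons_of_mem _ h1, le_trans (le_max_left _ _) h2⟩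
    · rw [if_neg hm] at h
      obtain ⟨h1, h2⟩ := ih h
      rw [max_eq_left (le_of_not_ge hm)] at h2
      exact ⟨List.mem_cons_of_mem _ h1, h2⟩

theorem Fm_eq_zero {m : Thr L} {ls : List L} (h : ∀ l ∈ ls, (l : Thr L) < m) : Fm m ls = 0 := by
  by_contra h0
  obtain ⟨x, hx⟩ := Multiset.exists_mem_of_ne_zero h0
  obtain ⟨h1, h2⟩ := Fm_mem hx
  exact absurd (h x h1) (not_lt_of_ge h2)

theorem Fm_split {m m' : Thr L} (h : m ≤ m') (ls : List L) :
    ∃ E, Fm m ls = Fm m' ls + E ∧ ∀ e ∈ E, (e : Thr L) < m' := by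
  induction ls generalizing m m' with
  | nil => exact ⟨0, by simp, by simp⟩
  | cons l ls ih =>
    by_cases h1 : m' ≤ ↑l
    · have h2 : m ≤ ↑l := le_trans h h1
      refine ⟨0, ?_, by simp⟩
      rw [Fm_cons, Fm_cons, if_pos h1, if_pos h2, max_eq_right h1, max_eq_right h2, add_zero]
    · by_cases h2 : m ≤ ↑l
      · push_neg at h1
        obtain ⟨E, hE, hElt⟩ := ih (show (l : Thr L) ≤ m' from le_of_lt h1)
        refine ⟨l ::ₘ E, ?_, ?_⟩
        · rw [Fm_cons, Fm_cons, if_pos h2, if_neg (not_le_of_gt h1),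
            max_eq_right h2, max_eq_left (le_of_lt h1), hE]
          refine Multiset.ext.2 fun x => ?_
          simp only [Multiset.count_cons, Multiset.count_add]
          split_ifs <;> omega
        · intro e he
          rcases Multiset.mem_cons.1 he with rfl | he
          · exact h1
          · exact hElt e he
      · push_neg at h2
        obtain ⟨E, hE, hElt⟩ := ih h
        refine ⟨E, ?_, hElt⟩
        rw [Fm_cons, Fm_cons, if_neg (not_le_of_gt h2),
          if_neg (fun hc => absurd (le_trans h hc) (not_le_of_gt h2)),
          max_eq_left (le_of_lt h2),
          max_eq_left (le_of_lt (lt_of_lt_of_le h2 h)), hE]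

theorem Fm_le_of_le {m m' : Thr L} (h : m ≤ m') (ls : List L) : Fm m' ls ≤ Fm m ls := by
  obtain ⟨E, hE, -⟩ := Fm_split h ls
  rw [hE]; exact Multiset.le_add_right _ _

/-- The sup of a measure bounds the running threshold. -/
theorem Tm_le_sup {m c : Thr L} {ls : List L} (hc : m ≤ c)
    (hF : ∀ x ∈ Fm m ls, (x : Thr L) ≤ c) : Tm m ls ≤ c := by
  induction ls generalizing m with
  | nil => exact hc
  | cons l ls ih =>
    rw [Tm_cons]
    by_cases h : m ≤ ↑l
    · have hl : (l : Thr L) ≤ c := by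
        refine hF l ?_
        rw [Fm_cons, if_pos h]; exact Multiset.mem_cons_self _ _
      refine ih (max_le hc hl) ?_
      intro x hx
      refine hF x ?_
      rw [Fm_cons, if_pos h]; exact Multiset.mem_cons_of_mem hx
    · push_neg at h
      rw [max_eq_left (le_of_lt h)]
      refine ih hc ?_
      intro x hx
      refine hF x ?_
      rw [Fm_cons, if_neg (not_le_of_gt h), max_eq_left (le_of_lt h)]; exact hx
/-! ### Reduction sequences with labelled steps -/

variable {A : Type*}

inductive SeqRed (q : L → A → A → Prop) : A → List L → A → Prop
  | nil (a : A) : SeqRed q a [] a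
  | cons {s t u : A} {l : L} {ls : List L} :
      q l s t → SeqRed q t ls u → SeqRed q s (l :: ls) u

theorem SeqRed.append {q : L → A → A → Prop} {s t u : A} {xs ys : List L}
    (h1 : SeqRed q s xs t) (h2 : SeqRed q t ys u) : SeqRed q s (xs ++ ys) u := by
  induction h1 with
  | nil => exact h2
  | cons hstep _ ih => exact SeqRed.cons hstep (ih h2)

theorem SeqRed.toReflTransGen {q : L → A → A → Prop} {s t : A} {xs : List L}
    (h : SeqRed q s xs t) : Relation.ReflTransGen (unionRel q) s t := by
  induction h with
  | nil => exact Relation.ReflTransGen.refl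
  | cons hstep _ ih => exact Relation.ReflTransGen.head ⟨_, hstep⟩ ih

/-! ### Shapes of local-diagram completions -/

/-- The shape of the completion `⇣_a^* · →_b^= · ⇣_{a⊔b}^*` as a list of labels. -/
def DComp (a b : L) (ls : List L) : Prop :=
  ∃ g d, (ls = g ++ d ∨ ls = g ++ b :: d) ∧ (∀ l ∈ g, l < a) ∧ ∀ l ∈ d, l < a ⊔ b

section CompAnalysis

variable {a b : L} {g d ls : List L}

theorem comp_labels_le (hab : a ≤ b) (hs : ls = g ++ d ∨ ls = g ++ b :: d)
    (hg : ∀ l ∈ g, l < a) (hd : ∀ l ∈ d, l < b) :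
    ∀ l ∈ ls, (l : Thr L) ≤ (b : Thr L) := by
  intro l hl
  rcases hs with rfl | rfl
  · rcases List.mem_append.1 hl with h | h
    · exact WithBot.coe_le_coe.2 (le_of_lt (lt_of_lt_of_le (hg l h) hab))
    · exact WithBot.coe_le_coe.2 (le_of_lt (hd l h))
  · rcases List.mem_append.1 hl with h | h
    · exact WithBot.coe_le_coe.2 (le_of_lt (lt_of_lt_of_le (hg l h) hab))
    · rcases List.mem_cons.1 h with rfl | h
      · exact le_refl _
      · exact WithBot.coe_le_coe.2 (le_of_lt (hd l h))

/-- At a threshold above `a`, a completion for the smaller side of the peak is either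
exactly the facet `{b}`, or consists of records strictly below `b`. -/
theorem Fm_lt_high (hab : a ≤ b) (hs : ls = g ++ d ∨ ls = g ++ b :: d)
    (hg : ∀ l ∈ g, l < a) (hd : ∀ l ∈ d, l < b) {m : Thr L} (hm : (a : Thr L) ≤ m) :
    (Fm m ls = {b} ∧ m ≤ (b : Thr L)) ∨ (∀ w ∈ Fm m ls, w < b) := by
  rcases hs with rfl | rfl
  · right
    intro w hw
    obtain ⟨hw1, -⟩ := Fm_mem hw
    rcases List.mem_append.1 hw1 with h | h
    · exact lt_of_lt_of_le (hg w h) hab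
    · exact hd w h
  · by_cases hmb : m ≤ (b : Thr L)
    · left
      have hgz : Fm m g = 0 :=
        Fm_eq_zero (fun l hl => lt_of_lt_of_le (WithBot.coe_lt_coe.2 (hg l hl)) hm)
      have hTm : Tm m g = m :=
        Tm_eq (fun l hl => le_trans (le_of_lt (WithBot.coe_lt_coe.2 (hg l hl))) hm)
      rw [Fm_append, hgz, hTm, zero_add, Fm_cons, if_pos hmb, max_eq_right hmb]
      have hdz : Fm (b : Thr L) d = 0 :=
        Fm_eq_zero (fun l hl => WithBot.coe_lt_coe.2 (hd l hl))
      rw [hdz]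
      exact ⟨rfl, hmb⟩
    · right
      push_neg at hmb
      intro w hw
      have h2 := (Fm_mem hw).2
      have h1 := comp_labels_le hab (Or.inr rfl) hg hd w (Fm_mem hw).1
      exact absurd (le_trans h2 h1) (not_le_of_gt hmb)

/-- At any threshold, a completion for the smaller side of the peak decomposes as an
optional facet `{b}` plus records that are below `a` (if the facet occurs) resp.
below `b` (if it does not). -/
theorem Fm_lt_bot (hab : a ≤ b) (hs : ls = g ++ d ∨ ls = g ++ b :: d)
    (hg : ∀ l ∈ g, l < a) (hd : ∀ l ∈ d, l < b) (m : Thr L) :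
    (∃ W, Fm m ls = {b} + W ∧ ∀ w ∈ W, w < a) ∨ (∃ W, Fm m ls = W ∧ ∀ w ∈ W, w < b) := by
  rcases hs with rfl | rfl
  · right
    refine ⟨Fm m (g ++ d), rfl, ?_⟩
    intro w hw
    obtain ⟨hw1, -⟩ := Fm_mem hw
    rcases List.mem_append.1 hw1 with h | h
    · exact lt_of_lt_of_le (hg w h) hab
    · exact hd w h
  · by_cases hmb : m ≤ (b : Thr L)
    · left
      have hTm : Tm m g ≤ (b : Thr L) :=
        Tm_le (fun l hl => le_of_lt (lt_of_lt_of_le (WithBot.coe_lt_coe.2 (hg l hl))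
          (WithBot.coe_le_coe.2 hab))) hmb
      refine ⟨Fm m g, ?_, ?_⟩
      · rw [Fm_append, Fm_cons, if_pos hTm, max_eq_right hTm]
        have hdz : Fm (b : Thr L) d = 0 :=
          Fm_eq_zero (fun l hl => WithBot.coe_lt_coe.2 (hd l hl))
        rw [hdz]
        refine Multiset.ext.2 fun x => ?_
        simp only [Multiset.count_add, Multiset.count_cons, Multiset.count_singleton, Multiset.count_zero]
        split_ifs <;> omega
      · intro w hw
        exact hg w (Fm_mem hw).1
    · right
      push_neg at hmb
      refine ⟨_, rfl, fun w hw => ?_⟩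
      have h2 := (Fm_mem hw).2
      have h1 := comp_labels_le hab (Or.inr rfl) hg hd w (Fm_mem hw).1
      exact absurd (lt_of_le_of_lt (le_trans h2 h1) hmb) (lt_irrefl _)

/-- At any threshold, a completion for the larger side of the peak decomposes as an
optional facet `{a}` plus records strictly below `b`. -/
theorem Fm_lu_decomp (hab : a ≤ b) (hs : ls = g ++ d ∨ ls = g ++ a :: d)
    (hg : ∀ l ∈ g, l < b) (hd : ∀ l ∈ d, l < b) (m : Thr L) :
    ∃ c W, Fm m ls = c + W ∧ c ≤ ({a} : Multiset L) ∧ ∀ w ∈ W, w < b := by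
  have hmem : ∀ w ∈ g ++ d, w < b := by
    intro w hw
    rcases List.mem_append.1 hw with h | h
    · exact hg w h
    · exact hd w h
  rcases hs with rfl | rfl
  · exact ⟨0, _, by rw [zero_add], by simp, fun w hw => hmem w (Fm_mem hw).1⟩
  · rw [Fm_append, Fm_cons]
    by_cases hc : Tm m g ≤ (a : Thr L)
    · rw [if_pos hc, max_eq_right hc]
      refine ⟨{a}, Fm m g + Fm (a : Thr L) d, ?_, le_refl _, ?_⟩
      · refine Multiset.ext.2 fun x => ?_
        simp only [Multiset.count_add, Multiset.count_cons, Multiset.count_singleton, Multiset.count_zero]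
        split_ifs <;> omega
      · intro w hw
        rcases Multiset.mem_add.1 hw with h | h
        · exact hg w (Fm_mem h).1
        · exact hd w (Fm_mem h).1
    · rw [if_neg hc, max_eq_left (le_of_not_ge hc)]
      refine ⟨0, _, by rw [zero_add], by simp, ?_⟩
      intro w hw
      rcases Multiset.mem_add.1 hw with h | h
      · exact hg w (Fm_mem h).1
      · exact hd w (Fm_mem h).1

/-- At a threshold above `b`, a completion for the larger side of the peak is either
exactly the facet `{a}` (forcing `a = b`) or empty. -/
theorem Fm_lu_high (hab : a ≤ b) (hs : ls = g ++ d ∨ ls = g ++ a :: d)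
    (hg : ∀ l ∈ g, l < b) (hd : ∀ l ∈ d, l < b) {m : Thr L} (hm : (b : Thr L) ≤ m) :
    (Fm m ls = {a} ∧ m ≤ (a : Thr L)) ∨ Fm m ls = 0 := by
  rcases hs with rfl | rfl
  · right
    refine Fm_eq_zero fun l hl => ?_
    rcases List.mem_append.1 hl with h | h
    · exact lt_of_lt_of_le (WithBot.coe_lt_coe.2 (hg l h)) hm
    · exact lt_of_lt_of_le (WithBot.coe_lt_coe.2 (hd l h)) hm
  · have hgz : Fm m g = 0 :=
      Fm_eq_zero (fun l hl => lt_of_lt_of_le (WithBot.coe_lt_coe.2 (hg l hl)) hm)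
    have hTm : Tm m g = m :=
      Tm_eq (fun l hl => le_trans (le_of_lt (WithBot.coe_lt_coe.2 (hg l hl))) hm)
    rw [Fm_append, hgz, hTm, zero_add, Fm_cons]
    by_cases hma : m ≤ (a : Thr L)
    · left
      rw [if_pos hma, max_eq_right hma]
      have hab' : a = b := le_antisymm hab (WithBot.coe_le_coe.1 (le_trans hm hma))
      have hdz : Fm (a : Thr L) d = 0 :=
        Fm_eq_zero (fun l hl => WithBot.coe_lt_coe.2 (hab' ▸ hd l hl))
      rw [hdz]
      exact ⟨rfl, hma⟩
    · right
      rw [if_neg hma, max_eq_left (le_of_not_ge hma)]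
      exact Fm_eq_zero (fun l hl => lt_of_lt_of_le (WithBot.coe_lt_coe.2 (hd l hl)) hm)

end CompAnalysis
theorem Fm_cons' (m : Thr L) (l : L) (ls : List L) :
    Fm m (l :: ls) = (if m ≤ ↑l then {l} else 0) + Fm (max m ↑l) ls := by
  rw [Fm_cons]
  split_ifs with h
  · rw [Multiset.singleton_add]
  · rw [zero_add]

theorem Tm_mono {m m' : Thr L} (h : m ≤ m') (ls : List L) : Tm m ls ≤ Tm m' ls := by
  induction ls generalizing m m' with
  | nil => exact h
  | cons l ls ih => exact ih (max_le_max h (le_refl _))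

theorem Tm_prefix (m : Thr L) (xs ys : List L) : Tm m xs ≤ Tm m (xs ++ ys) := by
  rw [Tm_append]; exact le_Tm _ _

theorem dmlt_pieces {X Y C W Z : Multiset L} (hx : X = C + W) (hy : Y = C + Z)
    (hZ : Z ≠ 0) (hdom : ∀ w ∈ W, ∃ z ∈ Z, w < z) : DMLT X Y := by
  rw [hx, hy]; exact dmlt_of_dom hZ hdom

theorem dmle_pieces {X Y C W Z : Multiset L} (hx : X = C + W) (hy : Y = C + Z)
    (hdom : ∀ w ∈ W, ∃ z ∈ Z, w < z) : DMLE X Y := by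
  rw [hx, hy]; exact dmle_of_dom hdom

theorem comp_labels_le' {a b : L} {g d ls : List L} (hab : a ≤ b)
    (hs : ls = g ++ d ∨ ls = g ++ a :: d)
    (hg : ∀ l ∈ g, l < b) (hd : ∀ l ∈ d, l < b) :
    ∀ l ∈ ls, (l : Thr L) ≤ (b : Thr L) := by
  intro l hl
  rcases hs with rfl | rfl
  · rcases List.mem_append.1 hl with h | h
    · exact WithBot.coe_le_coe.2 (le_of_lt (hg l h))
    · exact WithBot.coe_le_coe.2 (le_of_lt (hd l h))
  · rcases List.mem_append.1 hl with h | h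
    · exact WithBot.coe_le_coe.2 (le_of_lt (hg l h))
    · rcases List.mem_cons.1 h with rfl | h
      · exact WithBot.coe_le_coe.2 hab
      · exact WithBot.coe_le_coe.2 (le_of_lt (hd l h))

/-- The induction step of the decreasing-diagrams theorem (with the peak oriented
so that `a ≤ b`). -/
theorem key {q : L → A → A → Prop}
    (hLD : ∀ a b (s t u : A), q a s t → q b s u →
      ∃ v ltl lul, SeqRed q t ltl v ∧ SeqRed q u lul v ∧ DComp a b ltl ∧ DComp b a lul)
    {M : Multiset L}
    (ih : ∀ M', DMLT M' M → ∀ (s t u : A) (σ τ : List L),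
      SeqRed q s σ t → SeqRed q s τ u → Fm ⊥ σ + Fm ⊥ τ = M' →
      ∃ v σ₁ τ₁, SeqRed q t σ₁ v ∧ SeqRed q u τ₁ v ∧
        ∀ d, DMLE (Fm d (σ ++ σ₁)) (Fm d σ + Fm d τ) ∧
             DMLE (Fm d (τ ++ τ₁)) (Fm d σ + Fm d τ))
    {a b : L} (hab : a ≤ b) {s t₀ u₀ t u : A} {σ' τ' : List L}
    (h1 : q a s t₀) (hσ : SeqRed q t₀ σ' t) (h2 : q b s u₀) (hτ : SeqRed q u₀ τ' u)
    (hM : Fm ⊥ (a :: σ') + Fm ⊥ (b :: τ') = M) :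
    ∃ v σ₁ τ₁, SeqRed q t σ₁ v ∧ SeqRed q u τ₁ v ∧
      ∀ d, DMLE (Fm d ((a :: σ') ++ σ₁)) (Fm d (a :: σ') + Fm d (b :: τ')) ∧
           DMLE (Fm d ((b :: τ') ++ τ₁)) (Fm d (a :: σ') + Fm d (b :: τ')) := by
  have hab' : (a : Thr L) ≤ (b : Thr L) := WithBot.coe_le_coe.2 hab
  -- the local diagram
  obtain ⟨v₀, lt, lu, hlt, hlu, ⟨g, dl, hshape, hg, hd0⟩, ⟨g', d', hshape', hg', hd0'⟩⟩ :=
    hLD a b s t₀ u₀ h1 h2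
  have hd : ∀ l ∈ dl, l < b := by
    intro l hl; have := hd0 l hl; rwa [sup_eq_right.2 hab] at this
  have hd' : ∀ l ∈ d', l < b := by
    intro l hl; have := hd0' l hl; rwa [sup_eq_left.2 hab] at this
  have hltle : ∀ l ∈ lt, (l : Thr L) ≤ (b : Thr L) := comp_labels_le hab hshape hg hd
  have hlule : ∀ l ∈ lu, (l : Thr L) ≤ (b : Thr L) := comp_labels_le' hab hshape' hg' hd'
  -- decompositions of the two legs of the peak
  obtain ⟨Ea, hEa, hEalt⟩ := Fm_split (bot_le : (⊥ : Thr L) ≤ ↑a) σ'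
  obtain ⟨Eb, hEb, hEblt⟩ := Fm_split (bot_le : (⊥ : Thr L) ≤ ↑b) τ'
  have hEalt' : ∀ e ∈ Ea, e < a := fun e he => WithBot.coe_lt_coe.1 (hEalt e he)
  have hEblt' : ∀ e ∈ Eb, e < b := fun e he => WithBot.coe_lt_coe.1 (hEblt e he)
  have hconsa : Fm (⊥ : Thr L) (a :: σ') = {a} + Fm (a : Thr L) σ' := by
    rw [Fm_cons' , if_pos bot_le, max_eq_right bot_le]
  have hconsb : Fm (⊥ : Thr L) (b :: τ') = {b} + Fm (b : Thr L) τ' := by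
    rw [Fm_cons', if_pos bot_le, max_eq_right bot_le]
  -- the first recursive call, on the peak (σ', lt) at t₀
  have hR1 : DMLT (Fm ⊥ σ' + Fm ⊥ lt) M := by
    rw [← hM, hconsa, hconsb, hEa]
    rcases Fm_lt_bot hab hshape hg hd ⊥ with ⟨W, hW, hWlt⟩ | ⟨W, hW, hWlt⟩
    · refine dmlt_pieces (C := Fm (a : Thr L) σ' + {b}) (W := Ea + W)
        (Z := {a} + Fm (b : Thr L) τ') (hx := ?_) (hy := ?_) (by simp) ?_
      · rw [hW]
        refine Multiset.ext.2 fun x => ?_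
        simp only [Multiset.count_add]
        omega
      · refine Multiset.ext.2 fun x => ?_
        simp only [Multiset.count_add]
        omega
      · intro w hw
        refine ⟨a, by simp, ?_⟩
        rcases Multiset.mem_add.1 hw with h | h
        · exact hEalt' w h
        · exact hWlt w h
    · refine dmlt_pieces (C := Fm (a : Thr L) σ') (W := Ea + W)
        (Z := {a} + ({b} + Fm (b : Thr L) τ')) (hx := ?_) (hy := ?_) (by simp) ?_
      · rw [hW]
        refine Multiset.ext.2 fun x => ?_
        simp only [Multiset.count_add]
        omega
      · refine Multiset.ext.2 fun x => ?_
        simp only [Multiset.count_add]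
        omega
      · intro w hw
        rcases Multiset.mem_add.1 hw with h | h
        · exact ⟨a, by simp, hEalt' w h⟩
        · exact ⟨b, by simp, hWlt w h⟩
  obtain ⟨w, σ₁, ρ, hσ₁, hρ, B⟩ := ih _ hR1 t₀ t v₀ σ' lt hσ hlt rfl
  -- extraction of the bound on ρ
  have hcancel2 : ∀ mu : Thr L, DMLE (Fm (Tm mu lt) ρ) (Fm mu σ') := by
    intro mu
    have h := (B mu).2
    rw [Fm_append, add_comm (Fm mu σ') (Fm mu lt)] at h
    exact dmle_cancel h
  have hm₃b : Tm (⊥ : Thr L) lt ≤ (b : Thr L) := Tm_le hltle bot_le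
  have hm₂b : Tm (⊥ : Thr L) lu ≤ (b : Thr L) := Tm_le hlule bot_le
  have hρle : ∀ l ∈ ρ, (l : Thr L) ≤ max (b : Thr L) (Tm ⊥ σ') := by
    intro l hl
    have h1' : (l : Thr L) ≤ Tm (Tm ⊥ lt) ρ := mem_le_Tm hl _
    have h2' : Tm (Tm (⊥ : Thr L) lt) ρ ≤ max (b : Thr L) (Tm (⊥ : Thr L) σ') := by
      refine Tm_le_sup (le_trans hm₃b (le_max_left _ _)) ?_
      intro x hx
      obtain ⟨y, hy, hxy⟩ := dmle_exists_le (hcancel2 ⊥) hx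
      have : (y : Thr L) ≤ Tm (⊥ : Thr L) σ' := mem_le_Tm (Fm_mem hy).1 _
      exact le_trans (WithBot.coe_le_coe.2 hxy) (le_trans this (le_max_right _ _))
    exact le_trans h1' h2'
  have hlub : ∀ mu : Thr L, (b : Thr L) ≤ mu → Tm (⊥ : Thr L) σ' ≤ mu → Tm mu (lu ++ ρ) = mu := by
    intro mu hbmu hσmu
    refine Tm_eq ?_
    intro l hl
    rcases List.mem_append.1 hl with h | h
    · exact le_trans (hlule l h) hbmu
    · exact le_trans (hρle l h) (max_le hbmu hσmu)
  have hltb' : ∀ mu : Thr L, (b : Thr L) ≤ mu → Tm mu lt = mu := by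
    intro mu hbmu
    exact Tm_eq (fun l hl => le_trans (hltle l hl) hbmu)
  -- the second recursive call, on the peak (τ', lu ++ ρ) at u₀
  have hR2 : DMLT (Fm ⊥ τ' + Fm ⊥ (lu ++ ρ)) M := by
    rw [← hM, hconsa, hconsb, Fm_append, hEb]
    obtain ⟨Es, hEs, hEslt⟩ := Fm_split (le_max_left (Tm (⊥:Thr L) lu) (Tm (⊥:Thr L) lt)) ρ
    obtain ⟨E₄, hE₄, -⟩ := Fm_split (le_max_right (Tm (⊥:Thr L) lu) (Tm (⊥:Thr L) lt)) ρ
    have hEslt' : ∀ e ∈ Es, e < b := by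
      intro e he
      exact WithBot.coe_lt_coe.1 (lt_of_lt_of_le (hEslt e he) (max_le hm₂b hm₃b))
    have hle : DMLE (Fm (max (Tm (⊥:Thr L) lu) (Tm (⊥:Thr L) lt)) ρ)
        (Fm (a : Thr L) σ' + Ea) := by
      rw [← hEa]
      refine DMLE.trans (dmle_of_le ?_) (hcancel2 ⊥)
      rw [hE₄]; exact Multiset.le_add_right _ _
    obtain ⟨c, W, hWdec, hcle, hWlt⟩ := Fm_lu_decomp hab hshape' hg' hd' ⊥
    have step1 : DMLE (Fm (b:Thr L) τ' + Eb + (c + W) + (Fm (max (Tm (⊥:Thr L) lu) (Tm (⊥:Thr L) lt)) ρ + Es))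
        (Fm (b:Thr L) τ' + Eb + (c + W) + ((Fm (a : Thr L) σ' + Ea) + Es)) :=
      dmle_add (dmle_refl _) (dmle_add hle (dmle_refl _))
    refine dmlt_of_dmle_of_dmlt (DMLE.trans (dmle_of_eq ?_) step1) ?_
    · rw [hWdec, hEs]
      refine Multiset.ext.2 fun x => ?_
      simp only [Multiset.count_add]
      omega
    · rcases Multiset.le_singleton.1 hcle with rfl | rfl
      · refine dmlt_pieces (C := Fm (a:Thr L) σ' + Fm (b:Thr L) τ')
          (W := Eb + W + Ea + Es) (Z := {a} + {b}) (hx := ?_) (hy := ?_) (by simp) ?_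
        · refine Multiset.ext.2 fun x => ?_
          simp only [Multiset.count_add, Multiset.count_zero]
          omega
        · refine Multiset.ext.2 fun x => ?_
          simp only [Multiset.count_add]
          omega
        · intro x hx
          refine ⟨b, by simp, ?_⟩
          rcases Multiset.mem_add.1 hx with h | h
          · rcases Multiset.mem_add.1 h with h' | h'
            · rcases Multiset.mem_add.1 h' with h'' | h''
              · exact hEblt' x h''
              · exact hWlt x h''
            · exact lt_of_lt_of_le (hEalt' x h') hab
          · exact hEslt' x h
      · refine dmlt_pieces (C := Fm (a:Thr L) σ' + Fm (b:Thr L) τ' + {a})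
          (W := Eb + W + Ea + Es) (Z := {b}) (hx := ?_) (hy := ?_) (by simp) ?_
        · refine Multiset.ext.2 fun x => ?_
          simp only [Multiset.count_add]
          omega
        · refine Multiset.ext.2 fun x => ?_
          simp only [Multiset.count_add]
          omega
        · intro x hx
          refine ⟨b, by simp, ?_⟩
          rcases Multiset.mem_add.1 hx with h | h
          · rcases Multiset.mem_add.1 h with h' | h'
            · rcases Multiset.mem_add.1 h' with h'' | h''
              · exact hEblt' x h''
              · exact hWlt x h''
            · exact lt_of_lt_of_le (hEalt' x h') hab
          · exact hEslt' x h
  obtain ⟨z, τ₁, ρ₂, hτ₁, hρ₂, B'⟩ := ih _ hR2 u₀ u w τ' (lu ++ ρ) hτ (hlu.append hρ) rfl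
  have hcancel4 : ∀ mu : Thr L, DMLE (Fm (Tm mu (lu ++ ρ)) ρ₂) (Fm mu τ') := by
    intro mu
    have h := (B' mu).2
    rw [Fm_append, add_comm (Fm mu τ') (Fm mu (lu ++ ρ))] at h
    exact dmle_cancel h
  refine ⟨z, σ₁ ++ ρ₂, τ₁, hσ₁.append hρ₂, hτ₁, ?_⟩
  intro d
  have hRa : Fm d (a :: σ') =
      (if d ≤ (a : Thr L) then ({a} : Multiset L) else 0) + Fm (max d (a : Thr L)) σ' :=
    Fm_cons' d a σ'
  have hRb : Fm d (b :: τ') =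
      (if d ≤ (b : Thr L) then ({b} : Multiset L) else 0) + Fm (max d (b : Thr L)) τ' :=
    Fm_cons' d b τ'
  constructor
  · -- the bound for the σ-side
    show DMLE (Fm d ((a :: σ') ++ (σ₁ ++ ρ₂))) _
    rw [List.cons_append, ← List.append_assoc]
    rw [Fm_cons' d a (σ' ++ σ₁ ++ ρ₂), Fm_append]
    by_cases hdb : d ≤ (b : Thr L)
    · have hmaxb : max d (b : Thr L) = (b : Thr L) := max_eq_right hdb
      have hdab : max d (a : Thr L) ≤ (b : Thr L) := max_le hdb hab'
      have hσm₆ : Tm (⊥ : Thr L) σ' ≤ Tm (max d (a : Thr L)) (σ' ++ σ₁) :=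
        le_trans (Tm_mono bot_le σ') (Tm_prefix _ σ' σ₁)
      by_cases hbm : (b : Thr L) ≤ Tm (max d (a : Thr L)) (σ' ++ σ₁)
      · -- the σ-side has already seen a label ≥ b
        have hT : Tm (Tm (max d (a : Thr L)) (σ' ++ σ₁)) (lu ++ ρ)
            = Tm (max d (a : Thr L)) (σ' ++ σ₁) := hlub _ hbm (le_trans hσm₆ (le_refl _))
        have h4 : DMLE (Fm (Tm (max d (a : Thr L)) (σ' ++ σ₁)) ρ₂)
            (Fm (Tm (max d (a : Thr L)) (σ' ++ σ₁)) τ') := by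
          have := hcancel4 (Tm (max d (a : Thr L)) (σ' ++ σ₁))
          rwa [hT] at this
        have hB1 := (B (max d (a : Thr L))).1
        obtain ⟨E₆, hE₆, -⟩ := Fm_split hbm τ'
        have step : DMLE
            ((if d ≤ (a : Thr L) then ({a} : Multiset L) else 0) +
              (Fm (max d (a : Thr L)) (σ' ++ σ₁) +
                Fm (Tm (max d (a : Thr L)) (σ' ++ σ₁)) ρ₂))
            ((if d ≤ (a : Thr L) then ({a} : Multiset L) else 0) +
              ((Fm (max d (a : Thr L)) σ' + Fm (max d (a : Thr L)) lt) +
                Fm (Tm (max d (a : Thr L)) (σ' ++ σ₁)) τ')) :=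
          dmle_add (dmle_refl _) (dmle_add hB1 h4)
        refine DMLE.trans step ?_
        rw [hRa, hRb, hmaxb, if_pos hdb]
        rcases Fm_lt_high hab hshape hg hd (le_max_right d (a : Thr L)) with ⟨hcopy, -⟩ | hWlt
        · rw [hcopy, hE₆]
          refine dmle_pieces
            (C := (if d ≤ (a : Thr L) then ({a} : Multiset L) else 0) +
              Fm (max d (a : Thr L)) σ' + {b} + Fm (Tm (max d (a : Thr L)) (σ' ++ σ₁)) τ')
            (W := 0) (Z := E₆) ?_ ?_ (by simp)
          · refine Multiset.ext.2 fun x => ?_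
            simp only [Multiset.count_add, Multiset.count_zero]
            omega
          · refine Multiset.ext.2 fun x => ?_
            simp only [Multiset.count_add]
            omega
        · rw [hE₆]
          refine dmle_pieces
            (C := (if d ≤ (a : Thr L) then ({a} : Multiset L) else 0) +
              Fm (max d (a : Thr L)) σ' + Fm (Tm (max d (a : Thr L)) (σ' ++ σ₁)) τ')
            (W := Fm (max d (a : Thr L)) lt) (Z := {b} + E₆) ?_ ?_ ?_
          · refine Multiset.ext.2 fun x => ?_
            simp only [Multiset.count_add]
            omega
          · refine Multiset.ext.2 fun x => ?_
            simp only [Multiset.count_add]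
            omega
          · intro x hx
            exact ⟨b, by simp, hWlt x hx⟩
      · -- the σ-side is entirely below b
        push_neg at hbm
        have hm₆b : Tm (max d (a : Thr L)) (σ' ++ σ₁) ≤ (b : Thr L) := le_of_lt hbm
        obtain ⟨E₇, hE₇, hE₇lt⟩ := Fm_split (le_Tm (Tm (max d (a : Thr L)) (σ' ++ σ₁)) (lu ++ ρ)) ρ₂
        have hm₇b : Tm (Tm (max d (a : Thr L)) (σ' ++ σ₁)) (lu ++ ρ) ≤ (b : Thr L) := by
          refine Tm_le ?_ hm₆b
          intro l hl
          rcases List.mem_append.1 hl with h | h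
          · exact hlule l h
          · exact le_trans (hρle l h) (max_le (le_refl _) (le_trans hσm₆ hm₆b))
        have hE₇lt' : ∀ e ∈ E₇, e < b := fun e he =>
          WithBot.coe_lt_coe.1 (lt_of_lt_of_le (hE₇lt e he) hm₇b)
        have h4 := hcancel4 (Tm (max d (a : Thr L)) (σ' ++ σ₁))
        obtain ⟨E₈, hE₈, hE₈lt⟩ := Fm_split hm₆b τ'
        have hE₈lt' : ∀ e ∈ E₈, e < b := fun e he => WithBot.coe_lt_coe.1 (hE₈lt e he)
        have hW₀ : ∀ x ∈ Fm (max d (a : Thr L)) (σ' ++ σ₁), x < b := by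
          intro x hx
          exact WithBot.coe_lt_coe.1
            (lt_of_le_of_lt (mem_le_Tm (Fm_mem hx).1 _) hbm)
        have step : DMLE
            ((if d ≤ (a : Thr L) then ({a} : Multiset L) else 0) +
              (Fm (max d (a : Thr L)) (σ' ++ σ₁) + Fm (Tm (max d (a : Thr L)) (σ' ++ σ₁)) ρ₂))
            ((if d ≤ (a : Thr L) then ({a} : Multiset L) else 0) +
              (Fm (max d (a : Thr L)) (σ' ++ σ₁) +
                (Fm (Tm (max d (a : Thr L)) (σ' ++ σ₁)) τ' + E₇))) := by
          rw [hE₇]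
          exact dmle_add (dmle_refl _) (dmle_add (dmle_refl _) (dmle_add h4 (dmle_refl _)))
        refine DMLE.trans step ?_
        rw [hRa, hRb, hmaxb, if_pos hdb, hE₈]
        refine dmle_pieces
          (C := (if d ≤ (a : Thr L) then ({a} : Multiset L) else 0) + Fm (b : Thr L) τ')
          (W := Fm (max d (a : Thr L)) (σ' ++ σ₁) + E₈ + E₇)
          (Z := Fm (max d (a : Thr L)) σ' + {b}) ?_ ?_ ?_
        · refine Multiset.ext.2 fun x => ?_
          simp only [Multiset.count_add]
          omega
        · refine Multiset.ext.2 fun x => ?_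
          simp only [Multiset.count_add]
          omega
        · intro x hx
          refine ⟨b, by simp, ?_⟩
          rcases Multiset.mem_add.1 hx with h | h
          · rcases Multiset.mem_add.1 h with h' | h'
            · exact hW₀ x h'
            · exact hE₈lt' x h'
          · exact hE₇lt' x h
    · -- d is above b : everything is filtered away
      push_neg at hdb
      have hbd : (b : Thr L) ≤ d := le_of_lt hdb
      have had : (a : Thr L) ≤ d := le_trans hab' hbd
      have hdaeq : max d (a : Thr L) = d := max_eq_left had
      have hdbeq : max d (b : Thr L) = d := max_eq_left hbd
      have hdm : d ≤ Tm d (σ' ++ σ₁) := le_Tm _ _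
      have hbm₆ : (b : Thr L) ≤ Tm d (σ' ++ σ₁) := le_trans hbd hdm
      have hT : Tm (Tm d (σ' ++ σ₁)) (lu ++ ρ) = Tm d (σ' ++ σ₁) :=
        hlub _ hbm₆ (le_trans (Tm_mono bot_le σ') (Tm_prefix _ σ' σ₁))
      have h4 : DMLE (Fm (Tm d (σ' ++ σ₁)) ρ₂) (Fm (Tm d (σ' ++ σ₁)) τ') := by
        have := hcancel4 (Tm d (σ' ++ σ₁))
        rwa [hT] at this
      have hlt0 : Fm d lt = 0 :=
        Fm_eq_zero (fun l hl => lt_of_le_of_lt (hltle l hl) hdb)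
      have hB1 := (B d).1
      obtain ⟨E₉, hE₉, -⟩ := Fm_split hdm τ'
      have step : DMLE
          ((if d ≤ (a : Thr L) then ({a} : Multiset L) else 0) +
            (Fm d (σ' ++ σ₁) + Fm (Tm d (σ' ++ σ₁)) ρ₂))
          ((if d ≤ (a : Thr L) then ({a} : Multiset L) else 0) +
            ((Fm d σ' + Fm d lt) + Fm (Tm d (σ' ++ σ₁)) τ')) := by
        exact dmle_add (dmle_refl _) (dmle_add hB1 h4)
      rw [hdaeq]
      refine DMLE.trans step ?_
      rw [hRa, hRb, hdaeq, hdbeq, hlt0, if_neg (not_le_of_gt (lt_of_le_of_lt hab' hdb)),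
        if_neg (not_le_of_gt hdb), hE₉]
      refine dmle_pieces (C := Fm d σ' + Fm (Tm d (σ' ++ σ₁)) τ') (W := 0) (Z := E₉) ?_ ?_ (by simp)
      · refine Multiset.ext.2 fun x => ?_
        simp only [Multiset.count_add, Multiset.count_zero]
        omega
      · refine Multiset.ext.2 fun x => ?_
        simp only [Multiset.count_add, Multiset.count_zero]
        omega
  · -- the bound for the τ-side
    show DMLE (Fm d ((b :: τ') ++ τ₁)) _
    rw [List.cons_append]
    rw [Fm_cons' d b (τ' ++ τ₁)]
    by_cases hdb : d ≤ (b : Thr L)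
    · have hmaxb : max d (b : Thr L) = (b : Thr L) := max_eq_right hdb
      rw [hmaxb, if_pos hdb]
      have hB3 := (B' (b : Thr L)).1
      have hTlub : Tm (b : Thr L) lu = (b : Thr L) :=
        Tm_eq (fun l hl => hlule l hl)
      have happ : Fm (b : Thr L) (lu ++ ρ) = Fm (b : Thr L) lu + Fm (b : Thr L) ρ := by
        rw [Fm_append, hTlub]
      have hc2 : DMLE (Fm (b : Thr L) ρ) (Fm (b : Thr L) σ') := by
        have := hcancel2 (b : Thr L)
        rwa [hltb' _ (le_refl _)] at this
      obtain ⟨E₅, hE₅, -⟩ := Fm_split (show max d (a : Thr L) ≤ (b : Thr L) from max_le hdb hab') σ'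
      have step : DMLE ({b} + Fm (b : Thr L) (τ' ++ τ₁))
          ({b} + (Fm (b : Thr L) τ' + (Fm (b : Thr L) lu + Fm (b : Thr L) σ'))) := by
        refine dmle_add (dmle_refl _) (DMLE.trans hB3 ?_)
        rw [happ]
        exact dmle_add (dmle_refl _) (dmle_add (dmle_refl _) hc2)
      refine DMLE.trans step ?_
      rw [hRa, hRb, hmaxb, if_pos hdb, hE₅]
      rcases Fm_lu_high hab hshape' hg' hd' (le_refl (b : Thr L)) with ⟨hlu0, hba⟩ | hlu0
      · -- a = b and the copy survives
        have hba' : d ≤ (a : Thr L) := le_trans hdb hba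
        rw [hlu0, if_pos hba']
        refine dmle_pieces
          (C := {b} + Fm (b : Thr L) τ' + {a} + Fm (b : Thr L) σ')
          (W := 0) (Z := E₅) ?_ ?_ (by simp)
        · refine Multiset.ext.2 fun x => ?_
          simp only [Multiset.count_add, Multiset.count_zero]
          omega
        · refine Multiset.ext.2 fun x => ?_
          simp only [Multiset.count_add]
          omega
      · rw [hlu0]
        refine dmle_pieces
          (C := {b} + Fm (b : Thr L) τ' + Fm (b : Thr L) σ')
          (W := 0)
          (Z := (if d ≤ (a : Thr L) then ({a} : Multiset L) else 0) + E₅) ?_ ?_ (by simp)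
        · refine Multiset.ext.2 fun x => ?_
          simp only [Multiset.count_add, Multiset.count_zero]
          omega
        · refine Multiset.ext.2 fun x => ?_
          simp only [Multiset.count_add]
          omega
    · -- d is above b
      push_neg at hdb
      have hbd : (b : Thr L) ≤ d := le_of_lt hdb
      have hdbeq : max d (b : Thr L) = d := max_eq_left hbd
      rw [hdbeq, if_neg (not_le_of_gt hdb)]
      have hB3 := (B' d).1
      have hTlud : Tm d lu = d := Tm_eq (fun l hl => le_trans (hlule l hl) hbd)
      have happ : Fm d (lu ++ ρ) = Fm d lu + Fm d ρ := by
        rw [Fm_append, hTlud]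
      have hlu0 : Fm d lu = 0 := by
        rcases Fm_lu_high hab hshape' hg' hd' hbd with ⟨-, hda⟩ | h0
        · exact absurd (lt_of_le_of_lt (le_trans hda hab') hdb) (lt_irrefl _)
        · exact h0
      have hc2 : DMLE (Fm d ρ) (Fm d σ') := by
        have := hcancel2 d
        rwa [hltb' d hbd] at this
      have step : DMLE (Fm d (τ' ++ τ₁)) (Fm d τ' + Fm d σ') := by
        refine DMLE.trans hB3 ?_
        rw [happ, hlu0]
        refine DMLE.trans (dmle_add (dmle_refl (Fm d τ')) ?_) (dmle_refl _)
        rw [zero_add]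
        exact hc2
      refine DMLE.trans (by rw [zero_add]; exact step) ?_
      rw [hRa, hRb, hdbeq, max_eq_left (le_trans hab' hbd),
        if_neg (not_le_of_gt (lt_of_le_of_lt hab' hdb)), if_neg (not_le_of_gt hdb)]
      refine dmle_pieces (C := Fm d τ' + Fm d σ') (W := 0) (Z := 0) ?_ ?_ (by simp)
      · refine Multiset.ext.2 fun x => ?_
        simp only [Multiset.count_add, Multiset.count_zero]
        omega
      · refine Multiset.ext.2 fun x => ?_
        simp only [Multiset.count_add, Multiset.count_zero]
        omega
/-- The main lemma: peaks of labelled reduction sequences can be completed to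
valleys whose measure is controlled at every threshold. -/
theorem main {q : L → A → A → Prop} (hw : WellFounded ((· < ·) : L → L → Prop))
    (hLD : ∀ a b (s t u : A), q a s t → q b s u →
      ∃ v ltl lul, SeqRed q t ltl v ∧ SeqRed q u lul v ∧ DComp a b ltl ∧ DComp b a lul) :
    ∀ (M : Multiset L) (s t u : A) (σ τ : List L),
      SeqRed q s σ t → SeqRed q s τ u → Fm ⊥ σ + Fm ⊥ τ = M →
      ∃ v σ₁ τ₁, SeqRed q t σ₁ v ∧ SeqRed q u τ₁ v ∧
        ∀ d, DMLE (Fm d (σ ++ σ₁)) (Fm d σ + Fm d τ) ∧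
             DMLE (Fm d (τ ++ τ₁)) (Fm d σ + Fm d τ) := by
  intro M
  induction M using (dmlt_wf hw).induction with
  | _ M ih =>
    intro s t u σ τ hσ hτ hM
    cases hσ with
    | nil =>
      refine ⟨u, τ, [], hτ, SeqRed.nil u, fun d => ⟨?_, ?_⟩⟩
      · rw [List.nil_append, Fm_nil, zero_add]; exact dmle_refl _
      · rw [List.append_nil, Fm_nil, zero_add]; exact dmle_refl _
    | @cons _ t₀ _ a σ' h1 hσ1 =>
      cases hτ with
      | nil =>
        refine ⟨t, [], a :: σ', SeqRed.nil t, SeqRed.cons h1 hσ1, fun d => ⟨?_, ?_⟩⟩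
        · rw [List.append_nil, Fm_nil, add_zero]; exact dmle_refl _
        · rw [List.nil_append, Fm_nil, add_zero]; exact dmle_refl _
      | @cons _ u₀ _ b τ' h2 hτ1 =>
        rcases le_total a b with hab | hab
        · exact key hLD ih hab h1 hσ1 h2 hτ1 hM
        · obtain ⟨v, uleg, tleg, huleg, htleg, Bs⟩ :=
            key hLD ih hab h2 hτ1 h1 hσ1 (by rw [add_comm]; exact hM)
          refine ⟨v, tleg, uleg, htleg, huleg, fun d => ⟨?_, ?_⟩⟩
          · rw [add_comm (Fm d (a :: σ'))]; exact (Bs d).2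
          · rw [add_comm (Fm d (a :: σ'))]; exact (Bs d).1

theorem seq_of_rtg {q : L → A → A → Prop} {R : A → A → Prop} {P : L → Prop}
    (hsub : ∀ {x y}, R x y → ∃ l, q l x y ∧ P l) {x y : A}
    (h : Relation.ReflTransGen R x y) : ∃ ls, SeqRed q x ls y ∧ ∀ l ∈ ls, P l := by
  induction h with
  | refl => exact ⟨[], SeqRed.nil _, by simp⟩
  | tail hxy hstep ihh =>
    obtain ⟨ls, hls, hP⟩ := ihh
    obtain ⟨l, hl, hPl⟩ := hsub hstep
    refine ⟨ls ++ [l], hls.append (SeqRed.cons hl (SeqRed.nil _)), ?_⟩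
    intro x hx
    rcases List.mem_append.1 hx with h | h
    · exact hP x h
    · rw [List.mem_singleton.1 h]; exact hPl

/-- The decreasing-diagrams theorem for a system labelled by a well-founded
linear order. -/
theorem core {q : L → A → A → Prop} (hw : WellFounded ((· < ·) : L → L → Prop))
    (hLD : ∀ a b (s t u : A), q a s t → q b s u →
      ∃ v ltl lul, SeqRed q t ltl v ∧ SeqRed q u lul v ∧ DComp a b ltl ∧ DComp b a lul) :
    ∀ s t u : A, Relation.ReflTransGen (unionRel q) s t →
      Relation.ReflTransGen (unionRel q) s u →
      ∃ v, Relation.ReflTransGen (unionRel q) t v ∧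
        Relation.ReflTransGen (unionRel q) u v := by
  intro s t u hst hsu
  obtain ⟨σ, hσ, -⟩ := seq_of_rtg (P := fun _ => True)
    (fun {x y} hxy => by obtain ⟨l, hl⟩ := hxy; exact ⟨l, hl, trivial⟩) hst
  obtain ⟨τ, hτ, -⟩ := seq_of_rtg (P := fun _ => True)
    (fun {x y} hxy => by obtain ⟨l, hl⟩ := hxy; exact ⟨l, hl, trivial⟩) hsu
  obtain ⟨v, σ₁, τ₁, h1, h2, -⟩ := main hw hLD (Fm ⊥ σ + Fm ⊥ τ) s t u σ τ hσ hτ rfl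
  exact ⟨v, h1.toReflTransGen, h2.toReflTransGen⟩

end ELDLemmas

/-- Every extended locally decreasing ARS is confluent: if `>` (here `gt`) is a
well-founded strict order on `I`, `≥` (here `ge`) is a quasi-order on `I` with
`≥ · > · ≥ ⊆ >`, and every local peak `t ←_α s →_β u` can be completed as
`⇣_α^* · ⇣̂_β^= · ⇣_{αβ}^*` from `t`, meeting `⇣_β^* · ⇣̂_α^= · ⇣_{αβ}^*` from `u`,
then the union of all the relations `→_α` is confluent. -/
theorem extended_locally_decreasing_implies_confluent {A I : Type*}
    (r : I → A → A → Prop) (gt ge : I → I → Prop)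
    (hwf : WellFounded (fun a b => gt b a))
    (htrans : Transitive gt) (hirr : Irreflexive gt)
    (hge_refl : Reflexive ge) (hge_trans : Transitive ge)
    (hcompat : ∀ a b c d, ge a b → gt b c → ge c d → gt a d)
    (hLD : ∀ α β s t u, r α s t → r β s u →
      ∃ t₁ t₂ u₁ u₂ v,
        ReflTransGen (below r gt α) t t₁ ∧
        ReflGen (belowEq r gt ge β) t₁ t₂ ∧
        ReflTransGen (fun a b => below r gt α a b ∨ below r gt β a b) t₂ v ∧
        ReflTransGen (below r gt β) u u₁ ∧
        ReflGen (belowEq r gt ge α) u₁ u₂ ∧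
        ReflTransGen (fun a b => below r gt α a b ∨ below r gt β a b) u₂ v) :
    Confluent (unionRel r) := by
    classical
  let ι : I → Ordinal := fun α => (hwf.apply α).rank
  have hι : ∀ {α β}, gt α β → ι β < ι α := by
    intro α β h
    have h' : (fun a b => gt b a) β α := h
    have hlt := Acc.rank_lt_of_rel (hwf.apply α) h'
    have he : ((hwf.apply α).inv h').rank = (hwf.apply β).rank :=
      congrArg Acc.rank (Subsingleton.elim _ _)
    rw [he] at hlt
    exact hlt
  let q : Ordinal → A → A → Prop := fun o x y => ∃ α, ι α = o ∧ belowEq r gt ge α x y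
  have hun : unionRel q = unionRel r := by
    funext x y
    refine propext ⟨?_, ?_⟩
    · rintro ⟨o, α, -, γ, -, hγ⟩
      exact ⟨γ, hγ⟩
    · rintro ⟨α, hα⟩
      exact ⟨ι α, α, rfl, α, Or.inl (hge_refl α), hα⟩
  have hLDq : ∀ o₁ o₂ (s t u : A), q o₁ s t → q o₂ s u →
      ∃ v ltl lul, ELDLemmas.SeqRed q t ltl v ∧ ELDLemmas.SeqRed q u lul v ∧
        ELDLemmas.DComp o₁ o₂ ltl ∧ ELDLemmas.DComp o₂ o₁ lul := by
    rintro o₁ o₂ s t u ⟨α, rfl, γ, hγor, hγ⟩ ⟨β, rfl, δ, hδor, hδ⟩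
    obtain ⟨t₁, t₂, u₁, u₂, v, ht1, ht2, ht3, hu1, hu2, hu3⟩ := hLD γ δ s t u hγ hδ
    have hgtα : ∀ {ρ}, gt γ ρ → gt α ρ := by
      intro ρ h
      rcases hγor with h' | h'
      · exact hcompat α γ ρ ρ h' h (hge_refl ρ)
      · exact htrans h' h
    have hgtβ : ∀ {ρ}, gt δ ρ → gt β ρ := by
      intro ρ h
      rcases hδor with h' | h'
      · exact hcompat β δ ρ ρ h' h (hge_refl ρ)
      · exact htrans h' h
    have hsubT : ∀ {x y}, below r gt γ x y → ∃ l, q l x y ∧ l < ι α := by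
      rintro x y ⟨ρ, hρ1, hρ2⟩
      exact ⟨ι ρ, ⟨ρ, rfl, ρ, Or.inl (hge_refl ρ), hρ2⟩, hι (hgtα hρ1)⟩
    have hsubU : ∀ {x y}, below r gt δ x y → ∃ l, q l x y ∧ l < ι β := by
      rintro x y ⟨ρ, hρ1, hρ2⟩
      exact ⟨ι ρ, ⟨ρ, rfl, ρ, Or.inl (hge_refl ρ), hρ2⟩, hι (hgtβ hρ1)⟩
    have hsubM : ∀ {x y}, (below r gt γ x y ∨ below r gt δ x y) →
        ∃ l, q l x y ∧ l < ι α ⊔ ι β := by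
      rintro x y (h | h)
      · obtain ⟨l, h1, h2⟩ := hsubT h
        exact ⟨l, h1, lt_of_lt_of_le h2 le_sup_left⟩
      · obtain ⟨l, h1, h2⟩ := hsubU h
        exact ⟨l, h1, lt_of_lt_of_le h2 le_sup_right⟩
    have hfacetT : ∀ {x y}, belowEq r gt ge δ x y → q (ι β) x y := by
      rintro x y ⟨σc, hor, hσc⟩
      refine ⟨β, rfl, σc, ?_, hσc⟩
      rcases hδor with h' | h' <;> rcases hor with h'' | h''
      · exact Or.inl (hge_trans h' h'')
      · exact Or.inr (hcompat β δ σc σc h' h'' (hge_refl σc))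
      · exact Or.inr (hcompat β β δ σc (hge_refl β) h' h'')
      · exact Or.inr (htrans h' h'')
    have hfacetU : ∀ {x y}, belowEq r gt ge γ x y → q (ι α) x y := by
      rintro x y ⟨σc, hor, hσc⟩
      refine ⟨α, rfl, σc, ?_, hσc⟩
      rcases hγor with h' | h' <;> rcases hor with h'' | h''
      · exact Or.inl (hge_trans h' h'')
      · exact Or.inr (hcompat α γ σc σc h' h'' (hge_refl σc))
      · exact Or.inr (hcompat α α γ σc (hge_refl α) h' h'')
      · exact Or.inr (htrans h' h'')
    obtain ⟨gl, hgl, hglP⟩ := ELDLemmas.seq_of_rtg hsubT ht1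
    obtain ⟨gl', hgl', hglP'⟩ := ELDLemmas.seq_of_rtg hsubU hu1
    have hT : ∃ ltl, ELDLemmas.SeqRed q t ltl v ∧ ELDLemmas.DComp (ι α) (ι β) ltl := by
      obtain ⟨dls, hdls, hdlsP⟩ := ELDLemmas.seq_of_rtg hsubM ht3
      rcases ht2 with _ | hstep
      · exact ⟨gl ++ dls, hgl.append hdls, gl, dls, Or.inl rfl, hglP, hdlsP⟩
      · exact ⟨gl ++ (ι β :: dls),
          hgl.append (ELDLemmas.SeqRed.cons (hfacetT hstep) hdls),
          gl, dls, Or.inr rfl, hglP, hdlsP⟩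
    have hU : ∃ lul, ELDLemmas.SeqRed q u lul v ∧ ELDLemmas.DComp (ι β) (ι α) lul := by
      obtain ⟨dls', hdls', hdlsP'⟩ := ELDLemmas.seq_of_rtg hsubM hu3
      rcases hu2 with _ | hstep
      · refine ⟨gl' ++ dls', hgl'.append hdls', gl', dls', Or.inl rfl, hglP', ?_⟩
        intro l hl
        rw [sup_comm]
        exact hdlsP' l hl
      · refine ⟨gl' ++ (ι α :: dls'),
          hgl'.append (ELDLemmas.SeqRed.cons (hfacetU hstep) hdls'),
          gl', dls', Or.inr rfl, hglP', ?_⟩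
        intro l hl
        rw [sup_comm]
        exact hdlsP' l hl
    obtain ⟨ltl, h1', h2'⟩ := hT
    obtain ⟨lul, h3', h4'⟩ := hU
    exact ⟨v, ltl, lul, h1', h3', h2', h4'⟩
  have hconf : Confluent (unionRel q) := ELDLemmas.core Ordinal.lt_wf hLDq
  rw [hun] at hconf
  exact hconf
end

section
/- Reduction of extended local decreasingness to local decreasingness via class labels: let ⟨A, {→_α}_{α∈I}⟩ be an ARS, > a well-founded strict order on I, and ≥ a quasi-order on I with ≥ · > · ≥ ⊆ >, such that LD_{(>,≥)}(α,β) holds for all α, β ∈ I. For a subset C ⊆ I let →_C be the union of →_γ over γ ∈ C, for α ∈ I let C_α = {β ∈ I | α ≥ β and not α > β}, let ≻ be the relation on subsets given by S ≻ T iff ∃ α > β with S = C_α and T = C_β, let ⇣_C denote the union of →_D over all classes D with C ≻ D, and ⇣_{C D} = ⇣_C ∪ ⇣_D. Then for all α, β ∈ I: ←_{C_α} · →_{C_β} ⊆ ⇣_{C_α}^* · →_{C_β}^= · ⇣_{C_α C_β}^* · (⇣_{C_α C_β}^*)^{-1} · (→_{C_α}^=)^{-1} · (⇣_{C_β}^*)^{-1}.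 -/
open Relation

/-- The class `C_α = {β | α ≥ β and not α > β}` of a label `α`. -/
def classOf {I : Type*} (gt ge : I → I → Prop) (α : I) : Set I :=
  {β | ge α β ∧ ¬ gt α β}

/-- `→_C`: the union of `→_γ` over all `γ ∈ C`. -/
def relC {A I : Type*} (r : I → A → A → Prop) (C : Set I) : A → A → Prop :=
  fun a b => ∃ γ ∈ C, r γ a b

/-- The lifted order `≻` on subsets of `I`: `S ≻ T` iff there exist `α > β`
with `S = C_α` and `T = C_β`. -/
def succC {I : Type*} (gt ge : I → I → Prop) (S T : Set I) : Prop :=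
  ∃ α β, gt α β ∧ S = classOf gt ge α ∧ T = classOf gt ge β

/-- `⇣_C`: the union of `→_D` over all classes `D` with `C ≻ D`. -/
def belowC {A I : Type*} (r : I → A → A → Prop) (gt ge : I → I → Prop)
    (C : Set I) : A → A → Prop :=
  fun a b => ∃ D, succC gt ge C D ∧ relC r D a b

lemma mem_classOf_self {I : Type*} (gt ge : I → I → Prop)
    (hge_refl : Reflexive ge) (hirr : Irreflexive gt) (α : I) :
    α ∈ classOf gt ge α := ⟨hge_refl α, hirr α⟩

lemma below_to_belowC {A I : Type*} (r : I → A → A → Prop) (gt ge : I → I → Prop)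
    (hge_refl : Reflexive ge) (hirr : Irreflexive gt)
    (hcompat : ∀ a b c d, ge a b → gt b c → ge c d → gt a d)
    {α α' : I} (hmem : α' ∈ classOf gt ge α) {a b : A}
    (h : below r gt α' a b) : belowC r gt ge (classOf gt ge α) a b := by
  obtain ⟨γ, hgt, hr⟩ := h
  exact ⟨classOf gt ge γ, ⟨α, γ, hcompat α α' γ γ hmem.1 hgt (hge_refl γ), rfl, rfl⟩,
    γ, mem_classOf_self gt ge hge_refl hirr γ, hr⟩

lemma belowEq_cases {A I : Type*} (r : I → A → A → Prop) (gt ge : I → I → Prop)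
    (hge_refl : Reflexive ge) (hge_trans : Transitive ge) (hirr : Irreflexive gt)
    (hcompat : ∀ a b c d, ge a b → gt b c → ge c d → gt a d)
    {β β' : I} (hmem : β' ∈ classOf gt ge β) {a b : A}
    (h : belowEq r gt ge β' a b) :
    relC r (classOf gt ge β) a b ∨ belowC r gt ge (classOf gt ge β) a b := by
  obtain ⟨γ, hγ, hr⟩ := h
  rcases hγ with hge | hgt
  · by_cases hg : gt β γ
    · exact Or.inr ⟨classOf gt ge γ, ⟨β, γ, hg, rfl, rfl⟩,
        γ, mem_classOf_self gt ge hge_refl hirr γ, hr⟩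
    · exact Or.inl ⟨γ, ⟨hge_trans hmem.1 hge, hg⟩, hr⟩
  · exact Or.inr (below_to_belowC r gt ge hge_refl hirr hcompat hmem ⟨γ, hgt, hr⟩)

/-- Reduction of extended local decreasingness to local decreasingness via class
labels: if all peaks `←_α · →_β` are extended locally decreasing with respect to
`(>, ≥)`, then all peaks `←_{C_α} · →_{C_β}` are locally decreasing with respect
to the lifted order `≻` on classes:
`←_{C_α} · →_{C_β} ⊆ ⇣_{C_α}^* · →_{C_β}^= · ⇣_{C_α C_β}^* ·
(⇣_{C_α C_β}^*)⁻¹ · (→_{C_α}^=)⁻¹ · (⇣_{C_β}^*)⁻¹`. -/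
theorem extended_ld_to_class_ld {A I : Type*}
    (r : I → A → A → Prop) (gt ge : I → I → Prop)
    (hwf : WellFounded (fun a b => gt b a))
    (htrans : Transitive gt) (hirr : Irreflexive gt)
    (hge_refl : Reflexive ge) (hge_trans : Transitive ge)
    (hcompat : ∀ a b c d, ge a b → gt b c → ge c d → gt a d)
    (hLD : ∀ α β s t u, r α s t → r β s u →
      ∃ t₁ t₂ u₁ u₂ v,
        ReflTransGen (below r gt α) t t₁ ∧
        ReflGen (belowEq r gt ge β) t₁ t₂ ∧
        ReflTransGen (fun a b => below r gt α a b ∨ below r gt β a b) t₂ v ∧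
        ReflTransGen (below r gt β) u u₁ ∧
        ReflGen (belowEq r gt ge α) u₁ u₂ ∧
        ReflTransGen (fun a b => below r gt α a b ∨ below r gt β a b) u₂ v) :
    ∀ α β s t u,
      relC r (classOf gt ge α) s t → relC r (classOf gt ge β) s u →
      ∃ t₁ t₂ u₁ u₂ v,
        ReflTransGen (belowC r gt ge (classOf gt ge α)) t t₁ ∧
        ReflGen (relC r (classOf gt ge β)) t₁ t₂ ∧
        ReflTransGen (fun a b => belowC r gt ge (classOf gt ge α) a b ∨
          belowC r gt ge (classOf gt ge β) a b) t₂ v ∧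
        ReflTransGen (belowC r gt ge (classOf gt ge β)) u u₁ ∧
        ReflGen (relC r (classOf gt ge α)) u₁ u₂ ∧
        ReflTransGen (fun a b => belowC r gt ge (classOf gt ge α) a b ∨
          belowC r gt ge (classOf gt ge β) a b) u₂ v := by
  intro α β s t u ht hu
  obtain ⟨α', hαmem, hrα⟩ := ht
  obtain ⟨β', hβmem, hrβ⟩ := hu
  obtain ⟨t₁, t₂, u₁, u₂, v, h1, h2, h3, h4, h5, h6⟩ := hLD α' β' s t u hrα hrβ
  have mapA : ∀ {a b : A}, below r gt α' a b → belowC r gt ge (classOf gt ge α) a b :=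
    fun h => below_to_belowC r gt ge hge_refl hirr hcompat hαmem h
  have mapB : ∀ {a b : A}, below r gt β' a b → belowC r gt ge (classOf gt ge β) a b :=
    fun h => below_to_belowC r gt ge hge_refl hirr hcompat hβmem h
  have mapJ : ∀ {a b : A}, ReflTransGen (fun a b => below r gt α' a b ∨ below r gt β' a b) a b →
      ReflTransGen (fun a b => belowC r gt ge (classOf gt ge α) a b ∨
        belowC r gt ge (classOf gt ge β) a b) a b :=
    fun h => ReflTransGen.mono (fun _ _ (h : _ ∨ _) => h.imp mapA mapB) _ _ h
  have h3' := mapJ h3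
  have h6' := mapJ h6
  have h1' : ReflTransGen (belowC r gt ge (classOf gt ge α)) t t₁ :=
    ReflTransGen.mono (fun _ _ h => mapA h) _ _ h1
  have h4' : ReflTransGen (belowC r gt ge (classOf gt ge β)) u u₁ :=
    ReflTransGen.mono (fun _ _ h => mapB h) _ _ h4
  -- handle the two ReflGen steps
  have step2 : ∃ t₂', ReflGen (relC r (classOf gt ge β)) t₁ t₂' ∧
      ReflTransGen (fun a b => belowC r gt ge (classOf gt ge α) a b ∨
        belowC r gt ge (classOf gt ge β) a b) t₂' v := by
    rcases h2 with _ | h2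
    · exact ⟨t₁, ReflGen.refl, h3'⟩
    · rcases belowEq_cases r gt ge hge_refl hge_trans hirr hcompat hβmem h2 with hc | hc
      · exact ⟨t₂, ReflGen.single hc, h3'⟩
      · exact ⟨t₁, ReflGen.refl, ReflTransGen.head (Or.inr hc) h3'⟩
  have step5 : ∃ u₂', ReflGen (relC r (classOf gt ge α)) u₁ u₂' ∧
      ReflTransGen (fun a b => belowC r gt ge (classOf gt ge α) a b ∨
        belowC r gt ge (classOf gt ge β) a b) u₂' v := by
    rcases h5 with _ | h5
    · exact ⟨u₁, ReflGen.refl, h6'⟩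
    · rcases belowEq_cases r gt ge hge_refl hge_trans hirr hcompat hαmem h5 with hc | hc
      · exact ⟨u₂, ReflGen.single hc, h6'⟩
      · exact ⟨u₁, ReflGen.refl, ReflTransGen.head (Or.inl hc) h6'⟩
  obtain ⟨t₂', ht2, ht3⟩ := step2
  obtain ⟨u₂', hu2, hu3⟩ := step5
  exact ⟨t₁, t₂', u₁, u₂', v, h1', ht2, ht3, h4', hu2, hu3⟩
end

section
/- Abstract relative-termination criterion: let R and S be binary relations on a set A, let > be a well-founded strict order and ≥ a quasi-order on A such that ≥ · > · ≥ ⊆ >, R ∪ S ⊆ ≥, and (R \ >) is relatively terminating with respect to (S \ >). Then R is relatively terminating with respect to S. -/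
open Relation

/-- A relation is terminating (strongly normalizing) if it admits no infinite
sequence `a₀ → a₁ → a₂ → ⋯`. -/
def Terminating {A : Type*} (r : A → A → Prop) : Prop :=
  ¬ ∃ f : ℕ → A, ∀ n, r (f n) (f (n + 1))

/-- `R` is relatively terminating with respect to `S` (`R/S` is terminating)
if `→_S^* · →_R · →_S^*` is terminating. -/
def RelTerminating {A : Type*} (R S : A → A → Prop) : Prop :=
  Terminating (Comp (ReflTransGen S) (Comp R (ReflTransGen S)))

/-- Reflexive-transitive closure of a relation below a quasi-order stays below it. -/
lemma rtg_le {A : Type*} {S ge : A → A → Prop} (hge_refl : Reflexive ge)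
    (hge_trans : Transitive ge) (hS : ∀ u v, S u v → ge u v)
    {a b : A} (h : ReflTransGen S a b) : ge a b := by
  induction h with
  | refl => exact hge_refl _
  | tail _ h2 ih => exact hge_trans ih (hS _ _ h2)

/-- Strengthening an `S`-chain: if every step of the chain satisfies `P`
(expressed via the surrounding quasi-order positions), then the chain is a
chain for the strengthened relation. -/
lemma rtg_strengthen {A : Type*} {S ge : A → A → Prop} {P : A → A → Prop}
    (hge_refl : Reflexive ge) (hge_trans : Transitive ge)
    (hS : ∀ u v, S u v → ge u v) :
    ∀ {a b : A}, ReflTransGen S a b →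
      (∀ u v, ge a u → S u v → ge v b → P u v) →
      ReflTransGen (fun u v => S u v ∧ P u v) a b := by
  intro a b h
  induction h using Relation.ReflTransGen.head_induction_on with
  | refl => intro _; exact ReflTransGen.refl
  | head hst hcb ih =>
    rename_i a c
    intro hP
    have gecb : ge c b := rtg_le hge_refl hge_trans hS hcb
    refine ReflTransGen.head ⟨hst, hP a c (hge_refl a) hst gecb⟩ ?_
    exact ih (fun u v hu hs hv => hP u v (hge_trans (hS _ _ hst) hu) hs hv)

/-- Abstract relative-termination criterion: if `>` (here `gt`) is a
well-founded strict order and `≥` (here `ge`) a quasi-order on `A` with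
`≥ · > · ≥ ⊆ >`, `R ∪ S ⊆ ≥`, and `R \ >` is relatively terminating with
respect to `S \ >`, then `R` is relatively terminating with respect to `S`. -/
theorem relative_termination_criterion {A : Type*} (R S gt ge : A → A → Prop)
    (hwf : WellFounded (fun a b => gt b a))
    (htrans : Transitive gt) (hirr : Irreflexive gt)
    (hge_refl : Reflexive ge) (hge_trans : Transitive ge)
    (hcompat : ∀ a b c d, ge a b → gt b c → ge c d → gt a d)
    (hsub : ∀ a b, R a b ∨ S a b → ge a b)
    (hrel : RelTerminating (fun a b => R a b ∧ ¬ gt a b)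
                           (fun a b => S a b ∧ ¬ gt a b)) :
    RelTerminating R S := by
  rintro ⟨f, hf⟩
  have hSge : ∀ u v, S u v → ge u v := fun u v h => hsub u v (Or.inr h)
  -- each macro-step is a `ge`-step
  have hQge : ∀ n, ge (f n) (f (n + 1)) := by
    intro n
    obtain ⟨x, hax, y, hxy, hyb⟩ := hf n
    exact hge_trans (rtg_le hge_refl hge_trans hSge hax)
      (hge_trans (hsub _ _ (Or.inl hxy)) (rtg_le hge_refl hge_trans hSge hyb))
  have hQmono : ∀ n m, n ≤ m → ge (f n) (f m) := by
    intro n m hnm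
    induction m, hnm using Nat.le_induction with
    | base => exact hge_refl _
    | succ m _ ih => exact hge_trans ih (hQge m)
  -- eventually no `gt` macro-steps
  have hev : ∃ N, ∀ n, N ≤ n → ¬ gt (f n) (f (n + 1)) := by
    by_contra hcon
    push_neg at hcon
    -- build an infinite descending `gt` sequence
    have hcon' : ∀ N, ∃ n, N ≤ n ∧ gt (f n) (f (n + 1)) := by
      intro N; obtain ⟨n, hn, hg⟩ := hcon N; exact ⟨n, hn, hg⟩
    let h : ℕ → ℕ := fun k => Nat.rec (hcon' 0).choose
      (fun _ hk => (hcon' (hk + 1)).choose) k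
    have hstep : ∀ k, gt (f (h k)) (f (h k + 1)) := by
      intro k
      cases k with
      | zero => exact (hcon' 0).choose_spec.2
      | succ k => exact (hcon' (h k + 1)).choose_spec.2
    have hmono : ∀ k, h k + 1 ≤ h (k + 1) := by
      intro k; exact (hcon' (h k + 1)).choose_spec.1
    have hg : ∀ k, gt (f (h k)) (f (h (k + 1))) := by
      intro k
      exact hcompat _ _ _ _ (hge_refl _) (hstep k)
        (hQmono _ _ (hmono k))
    -- contradiction with well-foundedness
    have key : ∀ a, Acc (fun a b => gt b a) a → ∀ k, a = f (h k) → False := by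
      intro a ha
      induction ha with
      | intro a _ ih =>
        intro k hk
        exact ih (f (h (k + 1))) (hk ▸ hg k) (k + 1) rfl
    exact key _ (hwf.apply (f (h 0))) 0 rfl
  obtain ⟨N, hN⟩ := hev
  -- the tail gives an infinite chain for the strengthened relations
  apply hrel
  refine ⟨fun n => f (N + n), fun n => ?_⟩
  obtain ⟨x, hax, y, hxy, hyb⟩ := hf (N + n)
  set a := f (N + n) with ha
  have hnab : ¬ gt a (f (N + n + 1)) := hN (N + n) (Nat.le_add_right _ _)
  have geax : ge a x := rtg_le hge_refl hge_trans hSge hax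
  have gexy : ge x y := hsub _ _ (Or.inl hxy)
  have geyb : ge y (f (N + n + 1)) := rtg_le hge_refl hge_trans hSge hyb
  have chain1 : ReflTransGen (fun u v => S u v ∧ ¬ gt u v) a x := by
    refine rtg_strengthen hge_refl hge_trans hSge hax ?_
    intro u v hu hs hv hguv
    exact hnab (hcompat a u v _ hu hguv (hge_trans hv (hge_trans gexy geyb)))
  have chain2 : ReflTransGen (fun u v => S u v ∧ ¬ gt u v) y (f (N + n + 1)) := by
    refine rtg_strengthen hge_refl hge_trans hSge hyb ?_
    intro u v hu hs hv hguv
    exact hnab (hcompat a u v _ (hge_trans geax (hge_trans gexy hu)) hguv hv)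
  have nxy : ¬ gt x y := fun hgt => hnab (hcompat a x y _ geax hgt geyb)
  show Comp _ _ (f (N + n)) (f (N + (n + 1)))
  rw [show N + (n + 1) = N + n + 1 from rfl]
  exact ⟨x, chain1, y, ⟨hxy, nxy⟩, chain2⟩
end

section
/- The linear term rewrite system over the signature {nat, 0 (constants), hd, tl, inc, s (unary), cons (binary)} with rules nat → cons(0, inc(nat)), hd(cons(x,y)) → x, tl(cons(x,y)) → y, inc(cons(x,y)) → cons(s(x), inc(y)), and inc(tl(nat)) → tl(inc(nat)) is confluent. -/
open Relation

/-- Ground terms over the signature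
{nat, 0 (constants), hd, tl, inc, s (unary), cons (binary)}. -/
inductive Tm : Type where
  | nat : Tm
  | zero : Tm
  | hd : Tm → Tm
  | tl : Tm → Tm
  | inc : Tm → Tm
  | s : Tm → Tm
  | cons : Tm → Tm → Tm

/-- The one-step rewrite relation generated by the rules
`nat → cons(0, inc(nat))`, `hd(cons(x,y)) → x`, `tl(cons(x,y)) → y`,
`inc(cons(x,y)) → cons(s(x), inc(y))`, `inc(tl(nat)) → tl(inc(nat))`,
closed under contexts. -/
inductive Step : Tm → Tm → Prop where
  | nat_rule : Step .nat (.cons .zero (.inc .nat))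
  | hd_rule (t u : Tm) : Step (.hd (.cons t u)) t
  | tl_rule (t u : Tm) : Step (.tl (.cons t u)) u
  | inc_rule (t u : Tm) : Step (.inc (.cons t u)) (.cons (.s t) (.inc u))
  | inc_tl_rule : Step (.inc (.tl .nat)) (.tl (.inc .nat))
  | hd_cong {t u : Tm} : Step t u → Step (.hd t) (.hd u)
  | tl_cong {t u : Tm} : Step t u → Step (.tl t) (.tl u)
  | inc_cong {t u : Tm} : Step t u → Step (.inc t) (.inc u)
  | s_cong {t u : Tm} : Step t u → Step (.s t) (.s u)
  | cons_congl {t u : Tm} (v : Tm) : Step t u → Step (.cons t v) (.cons u v)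
  | cons_congr {t u : Tm} (v : Tm) : Step t u → Step (.cons v t) (.cons v u)

abbrev SStar := ReflTransGen Step

def hdDev : Tm → Tm
  | .cons a _ => a
  | t => .hd t

def tlDev : Tm → Tm
  | .cons _ b => b
  | t => .tl t

def incDev : Tm → Tm
  | .cons a b => .cons (.s a) (.inc b)
  | .tl .nat => .inc (.inc .nat)
  | .tl (.cons _ b) => .inc b
  | t => .inc t

def dev : Tm → Tm
  | .nat => .cons .zero (.inc .nat)
  | .zero => .zero
  | .s t => .s (dev t)
  | .cons t u => .cons (dev t) (dev u)
  | .hd t => hdDev (dev t)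
  | .tl t => tlDev (dev t)
  | .inc t => incDev (dev t)

lemma star_hd {t u} (h : SStar t u) : SStar (.hd t) (.hd u) :=
  ReflTransGen.lift Tm.hd (fun _ _ => Step.hd_cong) _ _ h

lemma star_tl {t u} (h : SStar t u) : SStar (.tl t) (.tl u) :=
  ReflTransGen.lift Tm.tl (fun _ _ => Step.tl_cong) _ _ h

lemma star_inc {t u} (h : SStar t u) : SStar (.inc t) (.inc u) :=
  ReflTransGen.lift Tm.inc (fun _ _ => Step.inc_cong) _ _ h

lemma star_s {t u} (h : SStar t u) : SStar (.s t) (.s u) :=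
  ReflTransGen.lift Tm.s (fun _ _ => Step.s_cong) _ _ h

lemma star_consl {t u} (v : Tm) (h : SStar t u) : SStar (.cons t v) (.cons u v) :=
  ReflTransGen.lift (fun x => Tm.cons x v) (fun _ _ h' => Step.cons_congl v h') _ _ h

lemma star_consr {t u} (v : Tm) (h : SStar t u) : SStar (.cons v t) (.cons v u) :=
  ReflTransGen.lift (fun x => Tm.cons v x) (fun _ _ h' => Step.cons_congr v h') _ _ h

lemma hd_to_hdDev : ∀ z, SStar (.hd z) (hdDev z) := by
  intro z
  cases z <;> first
    | exact ReflTransGen.single (Step.hd_rule _ _)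
    | exact ReflTransGen.refl

lemma tl_to_tlDev : ∀ z, SStar (.tl z) (tlDev z) := by
  intro z
  cases z <;> first
    | exact ReflTransGen.single (Step.tl_rule _ _)
    | exact ReflTransGen.refl

lemma inc_to_incDev : ∀ z, SStar (.inc z) (incDev z) := by
  intro z
  match z with
  | .cons a b => exact ReflTransGen.single (Step.inc_rule a b)
  | .tl .nat =>
      exact ReflTransGen.head (Step.inc_cong (Step.tl_cong Step.nat_rule))
        (ReflTransGen.single (Step.inc_cong (Step.tl_rule _ _)))
  | .tl (.cons a b) => exact ReflTransGen.single (Step.inc_cong (Step.tl_rule a b))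
  | .nat => exact ReflTransGen.refl
  | .zero => exact ReflTransGen.refl
  | .hd t => exact ReflTransGen.refl
  | .tl .zero => exact ReflTransGen.refl
  | .tl (.hd t) => exact ReflTransGen.refl
  | .tl (.tl t) => exact ReflTransGen.refl
  | .tl (.inc t) => exact ReflTransGen.refl
  | .tl (.s t) => exact ReflTransGen.refl
  | .inc t => exact ReflTransGen.refl
  | .s t => exact ReflTransGen.refl

lemma mono_hdDev : ∀ {x y}, Step x y → SStar (hdDev x) (hdDev y)
  | _, _, .nat_rule =>
      ReflTransGen.head (Step.hd_cong Step.nat_rule)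
        (ReflTransGen.single (Step.hd_rule _ _))
  | _, _, .hd_rule t u =>
      ReflTransGen.head (Step.hd_cong (Step.hd_rule t u)) (hd_to_hdDev t)
  | _, _, .tl_rule t u =>
      ReflTransGen.head (Step.hd_cong (Step.tl_rule t u)) (hd_to_hdDev u)
  | _, _, .inc_rule t u =>
      ReflTransGen.head (Step.hd_cong (Step.inc_rule t u))
        (ReflTransGen.single (Step.hd_rule _ _))
  | _, _, .inc_tl_rule => ReflTransGen.single (Step.hd_cong Step.inc_tl_rule)
  | _, _, .hd_cong h => ReflTransGen.single (Step.hd_cong (Step.hd_cong h))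
  | _, _, .tl_cong h => ReflTransGen.single (Step.hd_cong (Step.tl_cong h))
  | _, _, .inc_cong h => ReflTransGen.single (Step.hd_cong (Step.inc_cong h))
  | _, _, .s_cong h => ReflTransGen.single (Step.hd_cong (Step.s_cong h))
  | _, _, .cons_congl _ h => ReflTransGen.single h
  | _, _, .cons_congr _ _ => ReflTransGen.refl

lemma mono_tlDev : ∀ {x y}, Step x y → SStar (tlDev x) (tlDev y)
  | _, _, .nat_rule =>
      ReflTransGen.head (Step.tl_cong Step.nat_rule)
        (ReflTransGen.single (Step.tl_rule _ _))
  | _, _, .hd_rule t u =>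
      ReflTransGen.head (Step.tl_cong (Step.hd_rule t u)) (tl_to_tlDev t)
  | _, _, .tl_rule t u =>
      ReflTransGen.head (Step.tl_cong (Step.tl_rule t u)) (tl_to_tlDev u)
  | _, _, .inc_rule t u =>
      ReflTransGen.head (Step.tl_cong (Step.inc_rule t u))
        (ReflTransGen.single (Step.tl_rule _ _))
  | _, _, .inc_tl_rule => ReflTransGen.single (Step.tl_cong Step.inc_tl_rule)
  | _, _, .hd_cong h => ReflTransGen.single (Step.tl_cong (Step.hd_cong h))
  | _, _, .tl_cong h => ReflTransGen.single (Step.tl_cong (Step.tl_cong h))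
  | _, _, .inc_cong h => ReflTransGen.single (Step.tl_cong (Step.inc_cong h))
  | _, _, .s_cong h => ReflTransGen.single (Step.tl_cong (Step.s_cong h))
  | _, _, .cons_congl _ _ => ReflTransGen.refl
  | _, _, .cons_congr _ h => ReflTransGen.single h

lemma mono_incDev : ∀ {x y}, Step x y → SStar (incDev x) (incDev y)
  | _, _, .nat_rule =>
      ReflTransGen.head (Step.inc_cong Step.nat_rule)
        (ReflTransGen.single (Step.inc_rule _ _))
  | _, _, .hd_rule t u =>
      ReflTransGen.head (Step.inc_cong (Step.hd_rule t u)) (inc_to_incDev t)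
  | _, _, .tl_rule _ u => inc_to_incDev u
  | _, _, .inc_rule t u =>
      ReflTransGen.head (Step.inc_cong (Step.inc_rule t u))
        (ReflTransGen.single (Step.inc_rule _ _))
  | _, _, .inc_tl_rule => ReflTransGen.single (Step.inc_cong Step.inc_tl_rule)
  | _, _, .hd_cong h =>
      ReflTransGen.head (Step.inc_cong (Step.hd_cong h)) (inc_to_incDev _)
  | _, _, .inc_cong h => ReflTransGen.single (Step.inc_cong (Step.inc_cong h))
  | _, _, .s_cong h => ReflTransGen.single (Step.inc_cong (Step.s_cong h))
  | _, _, .cons_congl _ h => ReflTransGen.single (Step.cons_congl _ (Step.s_cong h))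
  | _, _, .cons_congr _ h => ReflTransGen.single (Step.cons_congr _ (Step.inc_cong h))
  | _, _, @Step.tl_cong .nat _ h => by cases h; exact ReflTransGen.refl
  | _, _, @Step.tl_cong (.cons p q) b h => by
      cases h with
      | cons_congl v h' => exact ReflTransGen.refl
      | cons_congr v h' => exact ReflTransGen.single (Step.inc_cong h')
  | _, _, @Step.tl_cong .zero b h =>
      ReflTransGen.head (Step.inc_cong (Step.tl_cong h)) (inc_to_incDev _)
  | _, _, @Step.tl_cong (.hd t) b h =>
      ReflTransGen.head (Step.inc_cong (Step.tl_cong h)) (inc_to_incDev _)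
  | _, _, @Step.tl_cong (.tl t) b h =>
      ReflTransGen.head (Step.inc_cong (Step.tl_cong h)) (inc_to_incDev _)
  | _, _, @Step.tl_cong (.inc t) b h =>
      ReflTransGen.head (Step.inc_cong (Step.tl_cong h)) (inc_to_incDev _)
  | _, _, @Step.tl_cong (.s t) b h =>
      ReflTransGen.head (Step.inc_cong (Step.tl_cong h)) (inc_to_incDev _)

lemma star_hdDev {x y} (h : SStar x y) : SStar (hdDev x) (hdDev y) := by
  induction h with
  | refl => exact ReflTransGen.refl
  | tail _ hstep ih => exact ih.trans (mono_hdDev hstep)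

lemma star_tlDev {x y} (h : SStar x y) : SStar (tlDev x) (tlDev y) := by
  induction h with
  | refl => exact ReflTransGen.refl
  | tail _ hstep ih => exact ih.trans (mono_tlDev hstep)

lemma star_incDev {x y} (h : SStar x y) : SStar (incDev x) (incDev y) := by
  induction h with
  | refl => exact ReflTransGen.refl
  | tail _ hstep ih => exact ih.trans (mono_incDev hstep)

lemma to_dev : ∀ t, SStar t (dev t)
  | .nat => ReflTransGen.single Step.nat_rule
  | .zero => ReflTransGen.refl
  | .s t => star_s (to_dev t)
  | .cons t u => (star_consl u (to_dev t)).trans (star_consr (dev t) (to_dev u))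
  | .hd t => (star_hd (to_dev t)).trans (hd_to_hdDev (dev t))
  | .tl t => (star_tl (to_dev t)).trans (tl_to_tlDev (dev t))
  | .inc t => (star_inc (to_dev t)).trans (inc_to_incDev (dev t))

lemma Z1 : ∀ {t u}, Step t u → SStar u (dev t)
  | _, _, .nat_rule => ReflTransGen.refl
  | _, _, .hd_rule t u => to_dev t
  | _, _, .tl_rule t u => to_dev u
  | _, _, .inc_rule t u =>
      (star_consl _ (star_s (to_dev t))).trans
        (star_consr _ (star_inc (to_dev u)))
  | _, _, .inc_tl_rule =>
      ReflTransGen.head (Step.tl_cong (Step.inc_cong Step.nat_rule))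
        (ReflTransGen.head (Step.tl_cong (Step.inc_rule _ _))
          (ReflTransGen.single (Step.tl_rule _ _)))
  | _, _, .hd_cong h => (star_hd (Z1 h)).trans (hd_to_hdDev _)
  | _, _, .tl_cong h => (star_tl (Z1 h)).trans (tl_to_tlDev _)
  | _, _, .inc_cong h => (star_inc (Z1 h)).trans (inc_to_incDev _)
  | _, _, .s_cong h => star_s (Z1 h)
  | _, _, @Step.cons_congl _ _ v h =>
      (star_consl v (Z1 h)).trans (star_consr _ (to_dev v))
  | _, _, @Step.cons_congr _ _ v h =>
      (star_consr v (Z1 h)).trans (star_consl _ (to_dev v))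

lemma Z2 : ∀ {t u}, Step t u → SStar (dev t) (dev u)
  | _, _, .nat_rule =>
      star_consr _ (ReflTransGen.head (Step.inc_cong Step.nat_rule)
        (ReflTransGen.single (Step.inc_rule _ _)))
  | _, _, .hd_rule t u => ReflTransGen.refl
  | _, _, .tl_rule t u => ReflTransGen.refl
  | _, _, .inc_rule t u => star_consr _ (inc_to_incDev (dev u))
  | _, _, .inc_tl_rule => ReflTransGen.refl
  | _, _, .hd_cong h => star_hdDev (Z2 h)
  | _, _, .tl_cong h => star_tlDev (Z2 h)
  | _, _, .inc_cong h => star_incDev (Z2 h)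
  | _, _, .s_cong h => star_s (Z2 h)
  | _, _, .cons_congl v h => star_consl _ (Z2 h)
  | _, _, .cons_congr v h => star_consr _ (Z2 h)

lemma star_dev {t u} (h : SStar t u) : SStar (dev t) (dev u) := by
  induction h with
  | refl => exact ReflTransGen.refl
  | tail _ hstep ih => exact ih.trans (Z2 hstep)

/-- The linear TRS `{nat → cons(0, inc(nat)), hd(cons(x,y)) → x,
tl(cons(x,y)) → y, inc(cons(x,y)) → cons(s(x), inc(y)),
inc(tl(nat)) → tl(inc(nat))}` is confluent. -/
theorem example_confluent : Confluent Step := by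
  have semi : ∀ t u v, Step t u → SStar t v → SStar u (dev v) ∧ SStar v (dev v) :=
    fun t u v h hv => ⟨(Z1 h).trans (star_dev hv), to_dev v⟩
  intro t u₁ u₂ h₁ h₂
  induction h₁ using ReflTransGen.head_induction_on generalizing u₂ with
  | refl => exact ⟨u₂, h₂, ReflTransGen.refl⟩
  | head hstep _ ih =>
      obtain ⟨hu, hv⟩ := semi _ _ _ hstep h₂
      obtain ⟨w, hw₁, hw₂⟩ := ih _ hu
      exact ⟨w, hw₁, hv.trans hw₂⟩
end
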